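/- arXiv:2112.07762 — 8 statements merged into one kernel-verified Lean document; each statement's English description precedes it below -/
import Mathlib

section
/- For every positive integer n, the number of partitions of n in which the smallest part occurs at least twice equals 2·p(n) − p(n+1), where p denotes the partition function. -/
open Multiset

namespace Stmt0Aux

/-- smallest element of a multiset of naturals (junk value 0 for the empty multiset) -/
def msmin (m : Multiset ℕ) : ℕ := WithTop.untopD 0 m.toFinset.min

lemma msmin_spec {m : Multiset ℕ} (h : m ≠ 0) : msmin m ∈ m ∧ ∀ t ∈ m, msmin m ≤ t := by
  have hne : m.toFinset.Nonempty := by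
    simpa [Finset.Nonempty] using (Multiset.exists_mem_of_ne_zero h)
  have hmin : msmin m = m.toFinset.min' hne := by
    rw [msmin, ← Finset.coe_min' hne]; rfl
  constructor
  · rw [hmin]; simpa using Finset.min'_mem _ hne
  · intro t ht
    rw [hmin]
    exact Finset.min'_le _ _ (by simpa using ht)

lemma msmin_mem {m : Multiset ℕ} (h : m ≠ 0) : msmin m ∈ m := (msmin_spec h).1

lemma msmin_le {m : Multiset ℕ} {t : ℕ} (ht : t ∈ m) : msmin m ≤ t :=
  (msmin_spec (by rintro rfl; simp at ht)).2 t ht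

lemma msmin_eq {m : Multiset ℕ} {a : ℕ} (h1 : a ∈ m) (h2 : ∀ t ∈ m, a ≤ t) :
    msmin m = a :=
  le_antisymm (msmin_le h1) (h2 _ (msmin_mem (by rintro rfl; simp at h1)))

/-- the predicate: smallest part occurs at least twice -/
def P (m : Multiset ℕ) : Prop := ∃ s ∈ m, (∀ t ∈ m, s ≤ t) ∧ 2 ≤ m.count s

lemma P_iff {m : Multiset ℕ} (h : m ≠ 0) : P m ↔ 2 ≤ m.count (msmin m) := by
  constructor
  · rintro ⟨s, hs, hmin, hc⟩
    have : msmin m = s := msmin_eq hs hmin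
    rwa [this]
  · intro hc
    exact ⟨msmin m, msmin_mem h, fun t ht => msmin_le ht, hc⟩

lemma not_P_iff {m : Multiset ℕ} (h : m ≠ 0) : ¬ P m ↔ m.count (msmin m) = 1 := by
  have h1 : 1 ≤ m.count (msmin m) := (Multiset.one_le_count_iff_mem).2 (msmin_mem h)
  rw [P_iff h]
  omega

lemma parts_ne_zero {n : ℕ} (hn : 0 < n) (π : n.Partition) : π.parts ≠ 0 := by
  intro h
  have := π.parts_sum
  rw [h] at this
  simp at this
  omega

/-- remove a part equal to 1 -/
def e1 (n : ℕ) : {π : (n+1).Partition // 1 ∈ π.parts} ≃ n.Partition where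
  toFun π := ⟨π.1.parts.erase 1,
    fun hi => π.1.parts_pos (Multiset.mem_of_mem_erase hi),
    by
      have hc : (1 : ℕ) ::ₘ π.1.parts.erase 1 = π.1.parts := Multiset.cons_erase π.2
      have := π.1.parts_sum
      rw [← hc, Multiset.sum_cons] at this
      omega⟩
  invFun π := ⟨⟨1 ::ₘ π.parts,
    fun hi => by
      rcases Multiset.mem_cons.1 hi with h | h
      · omega
      · exact π.parts_pos h,
    by rw [Multiset.sum_cons, π.parts_sum]; omega⟩, Multiset.mem_cons_self 1 _⟩
  left_inv π := by
    apply Subtype.ext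
    apply Nat.Partition.ext
    simpa using Multiset.cons_erase π.2
  right_inv π := by
    apply Nat.Partition.ext
    simp [Multiset.erase_cons_head]

lemma mem_erase_msmin_ge {m : Multiset ℕ} {t : ℕ} (hc : m.count (msmin m) = 1)
    (ht : t ∈ m.erase (msmin m)) : msmin m + 1 ≤ t := by
  have htm : t ∈ m := Multiset.mem_of_mem_erase ht
  have h1 : msmin m ≤ t := msmin_le htm
  rcases eq_or_lt_of_le h1 with h | h
  · exfalso
    have hmem : msmin m ∈ m.erase (msmin m) := h ▸ ht
    have hce := Multiset.count_erase_self (msmin m) m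
    have h3 : 1 ≤ (m.erase (msmin m)).count (msmin m) :=
      (Multiset.one_le_count_iff_mem).2 hmem
    omega
  · omega

/-- subtract 1 from (one copy of) the smallest part -/
def e2 (n : ℕ) (hn : 0 < n) :
    {π : (n+1).Partition // 1 ∉ π.parts} ≃ {π : n.Partition // ¬ P π.parts} where
  toFun π := by
    have hne : π.1.parts ≠ 0 := parts_ne_zero (by omega) π.1
    set s := msmin π.1.parts with hs
    have hsm : s ∈ π.1.parts := msmin_mem hne
    have hs2 : 2 ≤ s := by
      have := π.1.parts_pos hsm
      have h1 : s ≠ 1 := fun h => π.2 (by rw [h] at hsm; exact hsm)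
      omega
    have hsum : s + (π.1.parts.erase s).sum = n + 1 := by
      have hc : s ::ₘ π.1.parts.erase s = π.1.parts := Multiset.cons_erase hsm
      have := π.1.parts_sum
      rw [← hc, Multiset.sum_cons] at this
      omega
    refine ⟨⟨(s - 1) ::ₘ π.1.parts.erase s, ?_, ?_⟩, ?_⟩
    · intro i hi
      rcases Multiset.mem_cons.1 hi with h | h
      · omega
      · exact π.1.parts_pos (Multiset.mem_of_mem_erase h)
    · rw [Multiset.sum_cons]; omega
    · -- ¬ P
      have hmin : ∀ t ∈ (s - 1) ::ₘ π.1.parts.erase s, s - 1 ≤ t := by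
        intro t ht
        rcases Multiset.mem_cons.1 ht with h | h
        · omega
        · have := msmin_le (Multiset.mem_of_mem_erase h); omega
      have hnm : (s - 1) ∉ π.1.parts := by
        intro h
        have := msmin_le h
        omega
      have hcount : ((s - 1) ::ₘ π.1.parts.erase s).count (s - 1) = 1 := by
        rw [Multiset.count_cons_self]
        have : (π.1.parts.erase s).count (s - 1) = 0 := by
          rw [Multiset.count_eq_zero]
          intro h
          exact hnm (Multiset.mem_of_mem_erase h)
        omega
      rintro ⟨s', hs', hmin', hc'⟩
      have : s' = s - 1 :=
        le_antisymm (hmin' _ (Multiset.mem_cons_self _ _)) (hmin _ hs')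
      rw [this, hcount] at hc'
      omega
  invFun π := by
    have hne : π.1.parts ≠ 0 := parts_ne_zero hn π.1
    set s := msmin π.1.parts with hs
    have hsm : s ∈ π.1.parts := msmin_mem hne
    have hc1 : π.1.parts.count s = 1 := (not_P_iff hne).1 π.2
    have hsum : s + (π.1.parts.erase s).sum = n := by
      have hc : s ::ₘ π.1.parts.erase s = π.1.parts := Multiset.cons_erase hsm
      have := π.1.parts_sum
      rw [← hc, Multiset.sum_cons] at this
      omega
    refine ⟨⟨(s + 1) ::ₘ π.1.parts.erase s, ?_, ?_⟩, ?_⟩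
    · intro i hi
      rcases Multiset.mem_cons.1 hi with h | h
      · omega
      · exact π.1.parts_pos (Multiset.mem_of_mem_erase h)
    · rw [Multiset.sum_cons]; omega
    · -- 1 ∉
      intro h
      rcases Multiset.mem_cons.1 h with h | h
      · have := π.1.parts_pos hsm; omega
      · have := mem_erase_msmin_ge hc1 h
        have := π.1.parts_pos hsm
        omega
  left_inv := by
    rintro ⟨π, h1⟩
    apply Subtype.ext
    apply Nat.Partition.ext
    have hne : π.parts ≠ 0 := parts_ne_zero (by omega) π
    set s := msmin π.parts with hs
    have hsm : s ∈ π.parts := msmin_mem hne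
    have hs2 : 2 ≤ s := by
      have := π.parts_pos hsm
      have h : s ≠ 1 := fun h => h1 (by rw [h] at hsm; exact hsm)
      omega
    simp only
    have hmin2 : msmin ((s - 1) ::ₘ π.parts.erase s) = s - 1 := by
      apply msmin_eq (Multiset.mem_cons_self _ _)
      intro t ht
      rcases Multiset.mem_cons.1 ht with h | h
      · omega
      · have := msmin_le (Multiset.mem_of_mem_erase h); omega
    rw [hmin2, Multiset.erase_cons_head]
    have : s - 1 + 1 = s := by omega
    rw [this]
    exact Multiset.cons_erase hsm
  right_inv := by
    rintro ⟨π, h1⟩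
    apply Subtype.ext
    apply Nat.Partition.ext
    have hne : π.parts ≠ 0 := parts_ne_zero hn π
    set s := msmin π.parts with hs
    have hsm : s ∈ π.parts := msmin_mem hne
    have hc1 : π.parts.count s = 1 := (not_P_iff hne).1 h1
    simp only
    have hmin2 : msmin ((s + 1) ::ₘ π.parts.erase s) = s + 1 := by
      apply msmin_eq (Multiset.mem_cons_self _ _)
      intro t ht
      rcases Multiset.mem_cons.1 ht with h | h
      · omega
      · exact mem_erase_msmin_ge hc1 h
    rw [hmin2, Multiset.erase_cons_head]
    have : s + 1 - 1 = s := by omega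
    rw [this]
    exact Multiset.cons_erase hsm

end Stmt0Aux

/-- For every positive integer `n`, the number of partitions of `n` in which the smallest
part occurs at least twice equals `2·p(n) − p(n+1)`. -/
theorem stmt_0 (n : ℕ) (hn : 0 < n) :
    (Nat.card {π : n.Partition //
        ∃ s ∈ π.parts, (∀ t ∈ π.parts, s ≤ t) ∧ 2 ≤ π.parts.count s} : ℤ)
      = 2 * (Nat.card (Nat.Partition n) : ℤ) - (Nat.card (Nat.Partition (n + 1)) : ℤ) := by
  classical
  have hsplit1 : Nat.card (Nat.Partition n)
      = Nat.card {π : n.Partition // Stmt0Aux.P π.parts}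
        + Nat.card {π : n.Partition // ¬ Stmt0Aux.P π.parts} := by
    rw [← Nat.card_sum]
    exact (Nat.card_congr (Equiv.sumCompl _)).symm
  have hsplit2 : Nat.card (Nat.Partition (n + 1))
      = Nat.card {π : (n+1).Partition // 1 ∈ π.parts}
        + Nat.card {π : (n+1).Partition // 1 ∉ π.parts} := by
    rw [← Nat.card_sum]
    exact (Nat.card_congr (Equiv.sumCompl _)).symm
  have h1 : Nat.card {π : (n+1).Partition // 1 ∈ π.parts} = Nat.card (Nat.Partition n) :=
    Nat.card_congr (Stmt0Aux.e1 n)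
  have h2 : Nat.card {π : (n+1).Partition // 1 ∉ π.parts}
      = Nat.card {π : n.Partition // ¬ Stmt0Aux.P π.parts} :=
    Nat.card_congr (Stmt0Aux.e2 n hn)
  have hP : Nat.card {π : n.Partition //
      ∃ s ∈ π.parts, (∀ t ∈ π.parts, s ≤ t) ∧ 2 ≤ π.parts.count s}
      = Nat.card {π : n.Partition // Stmt0Aux.P π.parts} := rfl
  rw [hP, hsplit2, h1, h2, hsplit1]
  push_cast
  ring
end

section
/- For every positive integer n, the number of partitions of n in which the smallest part occurs at least twice equals the number of partitions of 2n in which the difference between the largest and smallest part equals n. -/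
namespace Stmt1Aux

theorem part_le {n : ℕ} (π : Nat.Partition n) {t : ℕ} (ht : t ∈ π.parts) : t ≤ n := by
  rw [← π.parts_sum]
  exact Multiset.le_sum_of_mem ht

/-- Remove one copy of `s` and add a part `s + n`. -/
def toMu (n : ℕ) (π : n.Partition) (s : ℕ) (hs : s ∈ π.parts) :
    (2 * n).Partition where
  parts := π.parts.erase s + {s + n}
  parts_pos := by
    intro i hi
    rcases Multiset.mem_add.1 hi with h | h
    · exact π.parts_pos (Multiset.mem_of_mem_erase h)
    · have := π.parts_pos hs
      simp only [Multiset.mem_singleton] at h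
      omega
  parts_sum := by
    have h1 : s + (π.parts.erase s).sum = n := by
      rw [← Multiset.sum_cons, Multiset.cons_erase hs, π.parts_sum]
    rw [Multiset.sum_add, Multiset.sum_singleton]
    omega

/-- Remove one copy of `M = s + n` and add a part `s`. -/
def toLam (n : ℕ) (m : (2 * n).Partition) (M s : ℕ) (hM : M ∈ m.parts)
    (heq : M = s + n) (hspos : 0 < s) : n.Partition where
  parts := m.parts.erase M + {s}
  parts_pos := by
    intro i hi
    rcases Multiset.mem_add.1 hi with h | h
    · exact m.parts_pos (Multiset.mem_of_mem_erase h)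
    · simp only [Multiset.mem_singleton] at h; omega
  parts_sum := by
    have h1 : M + (m.parts.erase M).sum = 2 * n := by
      rw [← Multiset.sum_cons, Multiset.cons_erase hM, m.parts_sum]
    rw [Multiset.sum_add, Multiset.sum_singleton]
    omega

theorem toMu_mem {n : ℕ} (π : n.Partition) (s : ℕ) (hs : s ∈ π.parts)
    (hmin : ∀ t ∈ π.parts, s ≤ t) (hcnt : 2 ≤ π.parts.count s) :
    ∃ M ∈ (toMu n π s hs).parts, ∃ u ∈ (toMu n π s hs).parts,
      (∀ t ∈ (toMu n π s hs).parts, t ≤ M) ∧ (∀ t ∈ (toMu n π s hs).parts, u ≤ t) ∧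
        M = u + n := by
  have hparts : (toMu n π s hs).parts = π.parts.erase s + {s + n} := rfl
  rw [hparts]
  have hsle : s ∈ π.parts.erase s := by
    rw [← Multiset.count_pos, Multiset.count_erase_self]
    omega
  refine ⟨s + n, by simp, s, Multiset.mem_add.2 (Or.inl hsle), ?_, ?_, rfl⟩
  · intro t ht
    rcases Multiset.mem_add.1 ht with h | h
    · have := part_le π (Multiset.mem_of_mem_erase h)
      omega
    · simp only [Multiset.mem_singleton] at h; omega
  · intro t ht
    rcases Multiset.mem_add.1 ht with h | h
    · exact hmin t (Multiset.mem_of_mem_erase h)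
    · simp only [Multiset.mem_singleton] at h; omega

noncomputable def theEquiv (n : ℕ) (hn : 0 < n) :
    {π : n.Partition //
        ∃ s ∈ π.parts, (∀ t ∈ π.parts, s ≤ t) ∧ 2 ≤ π.parts.count s} ≃
      {π : (2 * n).Partition //
        ∃ M ∈ π.parts, ∃ s ∈ π.parts,
          (∀ t ∈ π.parts, t ≤ M) ∧ (∀ t ∈ π.parts, s ≤ t) ∧ M = s + n} := by
  refine Equiv.ofBijective
    (fun x => ⟨toMu n x.1 x.2.choose x.2.choose_spec.1,
      toMu_mem x.1 x.2.choose x.2.choose_spec.1 x.2.choose_spec.2.1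
        x.2.choose_spec.2.2⟩) ⟨?_, ?_⟩
  · -- injective
    rintro ⟨π, h⟩ ⟨π', h'⟩ hfe
    obtain ⟨hs, hmin, hcnt⟩ := h.choose_spec
    obtain ⟨hs', hmin', hcnt'⟩ := h'.choose_spec
    set s := h.choose
    set s' := h'.choose
    have hparts : π.parts.erase s + {s + n} = π'.parts.erase s' + {s' + n} := by
      have := congrArg (fun y => (y.1 : (2 * n).Partition).parts) hfe
      simpa [toMu] using this
    have hspos : 0 < s := π.parts_pos hs
    have hspos' : 0 < s' := π'.parts_pos hs'
    have hss : s = s' := by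
      have hmem : s' + n ∈ π.parts.erase s + {s + n} := by
        rw [hparts]; simp
      rcases Multiset.mem_add.1 hmem with hh | hh
      · have := part_le π (Multiset.mem_of_mem_erase hh)
        omega
      · simp only [Multiset.mem_singleton] at hh; omega
    clear_value s s'
    subst hss
    have herase : π.parts.erase s = π'.parts.erase s :=
      add_right_cancel hparts
    apply Subtype.ext
    apply Nat.Partition.ext
    rw [← Multiset.cons_erase hs, ← Multiset.cons_erase hs', herase]
  · -- surjective
    rintro ⟨m, hB⟩
    obtain ⟨M, hM, s, hs, hmax, hmin, heq⟩ := hB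
    have hspos : 0 < s := m.parts_pos hs
    set π := toLam n m M s hM heq hspos with hπ
    have hπparts : π.parts = m.parts.erase M + {s} := rfl
    have hsmem : s ∈ π.parts := by rw [hπparts]; simp
    have hπmin : ∀ t ∈ π.parts, s ≤ t := by
      intro t ht
      rw [hπparts] at ht
      rcases Multiset.mem_add.1 ht with hh | hh
      · exact hmin t (Multiset.mem_of_mem_erase hh)
      · simp only [Multiset.mem_singleton] at hh; omega
    have hsM : s ≠ M := by omega
    have hcnt : 2 ≤ π.parts.count s := by
      have h1 : π.parts.count s = m.parts.count s + 1 := by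
        rw [hπparts]; simp [Multiset.count_erase_of_ne hsM]
      have : 0 < m.parts.count s := Multiset.count_pos.2 hs
      omega
    have hPA : ∃ u ∈ π.parts, (∀ t ∈ π.parts, u ≤ t) ∧ 2 ≤ π.parts.count u :=
      ⟨s, hsmem, hπmin, hcnt⟩
    refine ⟨⟨π, hPA⟩, ?_⟩
    obtain ⟨hs'', hmin'', hcnt''⟩ := hPA.choose_spec
    set s'' := hPA.choose
    have hs2 : s'' = s := le_antisymm (hmin'' s hsmem) (hπmin s'' hs'')
    apply Subtype.ext
    apply Nat.Partition.ext
    show (toMu n π s'' hs'').parts = m.parts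
    have : (toMu n π s'' hs'').parts = π.parts.erase s'' + {s'' + n} := rfl
    rw [this, hs2, hπparts, Multiset.erase_add_right_pos _ (Multiset.mem_singleton_self s),
      Multiset.erase_singleton, add_zero, ← heq, add_comm, Multiset.singleton_add,
      Multiset.cons_erase hM]

end Stmt1Aux

/-- The number of partitions of `n` whose smallest part occurs at least twice equals the
number of partitions of `2n` in which the largest part exceeds the smallest part by `n`. -/
theorem stmt_1 (n : ℕ) (hn : 0 < n) :
    Nat.card {π : n.Partition //
        ∃ s ∈ π.parts, (∀ t ∈ π.parts, s ≤ t) ∧ 2 ≤ π.parts.count s}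
      = Nat.card {π : (2 * n).Partition //
        ∃ M ∈ π.parts, ∃ s ∈ π.parts,
          (∀ t ∈ π.parts, t ≤ M) ∧ (∀ t ∈ π.parts, s ≤ t) ∧ M = s + n} := by
  exact Nat.card_congr (Stmt1Aux.theEquiv n hn)
end

section
/- For every positive integer n, the number of partitions of n in which the smallest part occurs exactly once equals p(n+1) − p(n), where p is the partition function. -/
namespace Stmt2Aux

/-- the minimal element of a nonzero multiset of naturals -/
noncomputable def mmin (M : Multiset ℕ) (h : M ≠ 0) : ℕ :=
  M.toFinset.min' (Multiset.toFinset_nonempty.2 h)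

lemma mmin_mem (M : Multiset ℕ) (h : M ≠ 0) : mmin M h ∈ M := by
  have := M.toFinset.min'_mem (Multiset.toFinset_nonempty.2 h)
  simpa [mmin] using this

lemma mmin_le (M : Multiset ℕ) (h : M ≠ 0) {t : ℕ} (ht : t ∈ M) : mmin M h ≤ t :=
  M.toFinset.min'_le t (by simpa using ht)

lemma parts_ne {n : ℕ} (hn : 0 < n) (π : n.Partition) : π.parts ≠ 0 := by
  intro h
  have := π.parts_sum
  rw [h] at this
  simp at this
  omega

lemma gt_of_mem_erase {M : Multiset ℕ} {s t : ℕ} (hsle : ∀ u ∈ M, s ≤ u)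
    (hc : M.count s = 1) (ht : t ∈ M.erase s) : s < t := by
  have h1 : t ∈ M := Multiset.mem_of_mem_erase ht
  have h2 : t ≠ s := by
    rintro rfl
    have hce := Multiset.count_erase_self t M
    rw [hc] at hce
    have : t ∉ M.erase t := by rw [← Multiset.count_eq_zero]; omega
    exact this ht
  exact lt_of_le_of_ne (hsle t h1) (Ne.symm h2)

/-- forward map: increase the (unique) smallest part by one. -/
noncomputable def fwd {n : ℕ} (π : n.Partition)
    (h : ∃ s ∈ π.parts, (∀ t ∈ π.parts, s ≤ t) ∧ π.parts.count s = 1) :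
    (n + 1).Partition where
  parts := (h.choose + 1) ::ₘ π.parts.erase h.choose
  parts_pos := fun {i} hi => by
    rcases Multiset.mem_cons.1 hi with rfl | hi
    · omega
    · exact π.parts_pos (Multiset.mem_of_mem_erase hi)
  parts_sum := by
    obtain ⟨hs, -, -⟩ := h.choose_spec
    have h1 := congrArg Multiset.sum (Multiset.cons_erase hs)
    rw [Multiset.sum_cons, π.parts_sum] at h1
    rw [Multiset.sum_cons]
    omega

lemma fwd_no_one {n : ℕ} (π : n.Partition)
    (h : ∃ s ∈ π.parts, (∀ t ∈ π.parts, s ≤ t) ∧ π.parts.count s = 1) :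
    1 ∉ (fwd π h).parts := by
  intro h1
  obtain ⟨hs, hle, hc⟩ := h.choose_spec
  have hspos := π.parts_pos hs
  rcases Multiset.mem_cons.1 h1 with he | h1
  · omega
  · have := gt_of_mem_erase hle hc h1
    omega

lemma mmin_ge_two {n : ℕ} (π : (n + 1).Partition) (h1 : 1 ∉ π.parts) :
    2 ≤ mmin π.parts (parts_ne (Nat.succ_pos n) π) := by
  set m := mmin π.parts (parts_ne (Nat.succ_pos n) π) with hm
  have hmem := mmin_mem π.parts (parts_ne (Nat.succ_pos n) π)
  have hpos : 0 < m := π.parts_pos hmem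
  rcases Nat.lt_or_ge m 2 with h | h
  · exfalso
    apply h1
    have hmm : m ∈ π.parts := hmem
    have hm1 : m = 1 := by omega
    rwa [hm1] at hmm
  · exact h

/-- backward map: decrease the smallest part by one. -/
noncomputable def bwd {n : ℕ} (π : (n + 1).Partition) (h1 : 1 ∉ π.parts) :
    n.Partition where
  parts := (mmin π.parts (parts_ne (Nat.succ_pos n) π) - 1) ::ₘ
      π.parts.erase (mmin π.parts (parts_ne (Nat.succ_pos n) π))
  parts_pos := fun {i} hi => by
    have h2 := mmin_ge_two π h1
    rcases Multiset.mem_cons.1 hi with rfl | hi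
    · omega
    · exact π.parts_pos (Multiset.mem_of_mem_erase hi)
  parts_sum := by
    have h2 := mmin_ge_two π h1
    have hmem := mmin_mem π.parts (parts_ne (Nat.succ_pos n) π)
    have hs := congrArg Multiset.sum (Multiset.cons_erase hmem)
    rw [Multiset.sum_cons, π.parts_sum] at hs
    rw [Multiset.sum_cons]
    omega

lemma bwd_min_notmem {n : ℕ} (π : (n + 1).Partition) (h1 : 1 ∉ π.parts) :
    (mmin π.parts (parts_ne (Nat.succ_pos n) π) - 1) ∉
      π.parts.erase (mmin π.parts (parts_ne (Nat.succ_pos n) π)) := by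
  set m := mmin π.parts (parts_ne (Nat.succ_pos n) π) with hm
  intro hmem
  have h2 := mmin_ge_two π h1
  have := mmin_le π.parts (parts_ne (Nat.succ_pos n) π)
      (Multiset.mem_of_mem_erase hmem)
  omega

lemma bwd_le {n : ℕ} (π : (n + 1).Partition) (h1 : 1 ∉ π.parts) :
    ∀ t ∈ (bwd π h1).parts, mmin π.parts (parts_ne (Nat.succ_pos n) π) - 1 ≤ t := by
  intro t ht
  rcases Multiset.mem_cons.1 ht with rfl | ht
  · exact le_rfl
  · have := mmin_le π.parts (parts_ne (Nat.succ_pos n) π)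
        (Multiset.mem_of_mem_erase ht)
    omega

lemma bwd_mem {n : ℕ} (π : (n + 1).Partition) (h1 : 1 ∉ π.parts) :
    mmin π.parts (parts_ne (Nat.succ_pos n) π) - 1 ∈ (bwd π h1).parts :=
  Multiset.mem_cons_self _ _

lemma bwd_prop {n : ℕ} (π : (n + 1).Partition) (h1 : 1 ∉ π.parts) :
    ∃ s ∈ (bwd π h1).parts, (∀ t ∈ (bwd π h1).parts, s ≤ t) ∧
      (bwd π h1).parts.count s = 1 := by
  refine ⟨_, bwd_mem π h1, bwd_le π h1, ?_⟩
  show ((mmin π.parts (parts_ne (Nat.succ_pos n) π) - 1) ::ₘ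
      π.parts.erase (mmin π.parts (parts_ne (Nat.succ_pos n) π))).count _ = 1
  rw [Multiset.count_cons_self]
  have : (π.parts.erase (mmin π.parts (parts_ne (Nat.succ_pos n) π))).count
      (mmin π.parts (parts_ne (Nat.succ_pos n) π) - 1) = 0 :=
    Multiset.count_eq_zero.2 (bwd_min_notmem π h1)
  omega

/-- the key equivalence. -/
noncomputable def equivMin (n : ℕ) (hn : 0 < n) :
    {π : n.Partition //
        ∃ s ∈ π.parts, (∀ t ∈ π.parts, s ≤ t) ∧ π.parts.count s = 1}
      ≃ {π : (n + 1).Partition // 1 ∉ π.parts} where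
  toFun p := ⟨fwd p.1 p.2, fwd_no_one p.1 p.2⟩
  invFun p := ⟨bwd p.1 p.2, bwd_prop p.1 p.2⟩
  left_inv := by
    rintro ⟨π, h⟩
    apply Subtype.ext
    apply Nat.Partition.ext
    obtain ⟨hs, hle, hc⟩ := h.choose_spec
    set s := h.choose with hsdef
    -- the min of (fwd π h).parts is s + 1
    set σ : (n + 1).Partition := fwd π h with hσ
    have hσparts : σ.parts = (s + 1) ::ₘ π.parts.erase s := rfl
    have hmem : (s + 1) ∈ σ.parts := by rw [hσparts]; exact Multiset.mem_cons_self _ _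
    have hm1 : mmin σ.parts (parts_ne (Nat.succ_pos n) σ) ≤ s + 1 :=
      mmin_le _ _ hmem
    have hm2 : s + 1 ≤ mmin σ.parts (parts_ne (Nat.succ_pos n) σ) := by
      have hmm := mmin_mem σ.parts (parts_ne (Nat.succ_pos n) σ)
      have hmm' : mmin σ.parts (parts_ne (Nat.succ_pos n) σ) ∈
          (s + 1) ::ₘ π.parts.erase s := by rw [← hσparts]; exact hmm
      rcases Multiset.mem_cons.1 hmm' with he | hmm
      · omega
      · have := gt_of_mem_erase hle hc hmm
        omega
    have hmeq : mmin σ.parts (parts_ne (Nat.succ_pos n) σ) = s + 1 := le_antisymm hm1 hm2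
    show (bwd σ (fwd_no_one π h)).parts = π.parts
    show (mmin σ.parts (parts_ne (Nat.succ_pos n) σ) - 1) ::ₘ
        σ.parts.erase (mmin σ.parts (parts_ne (Nat.succ_pos n) σ)) = π.parts
    rw [hmeq]
    simp only [Nat.add_sub_cancel]
    rw [hσparts, Multiset.erase_cons_head]
    exact Multiset.cons_erase hs
  right_inv := by
    rintro ⟨π, h1⟩
    apply Subtype.ext
    apply Nat.Partition.ext
    set σ : n.Partition := bwd π h1 with hσ
    set m := mmin π.parts (parts_ne (Nat.succ_pos n) π) with hm
    have h2 : 2 ≤ m := mmin_ge_two π h1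
    have hσparts : σ.parts = (m - 1) ::ₘ π.parts.erase m := rfl
    set h' := bwd_prop π h1 with hh'
    obtain ⟨hs', hle', hc'⟩ := h'.choose_spec
    -- h'.choose = m - 1 by uniqueness of the minimum
    have heq : h'.choose = m - 1 :=
      le_antisymm (hle' _ (bwd_mem π h1)) (bwd_le π h1 _ hs')
    show (fwd σ h').parts = π.parts
    show (h'.choose + 1) ::ₘ σ.parts.erase h'.choose = π.parts
    rw [heq, hσparts, Multiset.erase_cons_head]
    have : m - 1 + 1 = m := by omega
    rw [this]
    exact Multiset.cons_erase (mmin_mem _ _)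

/-- partitions of n+1 containing a part 1 correspond to partitions of n. -/
noncomputable def equivOnes (n : ℕ) :
    {π : (n + 1).Partition // 1 ∈ π.parts} ≃ Nat.Partition n where
  toFun p := ⟨p.1.parts.erase 1,
    fun {i} hi => p.1.parts_pos (Multiset.mem_of_mem_erase hi),
    by
      have h1 := congrArg Multiset.sum (Multiset.cons_erase p.2)
      rw [Multiset.sum_cons, p.1.parts_sum] at h1
      omega⟩
  invFun π := ⟨⟨1 ::ₘ π.parts,
    fun {i} hi => by
      rcases Multiset.mem_cons.1 hi with rfl | hi
      · omega
      · exact π.parts_pos hi,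
    by rw [Multiset.sum_cons, π.parts_sum]; omega⟩, Multiset.mem_cons_self 1 _⟩
  left_inv := by
    rintro ⟨π, h⟩
    apply Subtype.ext
    apply Nat.Partition.ext
    exact Multiset.cons_erase h
  right_inv := by
    intro π
    apply Nat.Partition.ext
    exact Multiset.erase_cons_head 1 _

end Stmt2Aux

open Stmt2Aux in
/-- The number of partitions of `n` whose smallest part occurs exactly once equals
`p(n+1) − p(n)`. -/
theorem stmt_2 (n : ℕ) (hn : 0 < n) :
    (Nat.card {π : n.Partition //
        ∃ s ∈ π.parts, (∀ t ∈ π.parts, s ≤ t) ∧ π.parts.count s = 1} : ℤ)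
      = (Nat.card (Nat.Partition (n + 1)) : ℤ) - (Nat.card (Nat.Partition n) : ℤ) := by
  classical
  have e : Nat.Partition (n + 1) ≃
      Nat.Partition n ⊕ {π : n.Partition //
        ∃ s ∈ π.parts, (∀ t ∈ π.parts, s ≤ t) ∧ π.parts.count s = 1} :=
    (Equiv.sumCompl (fun π : (n + 1).Partition => 1 ∈ π.parts)).symm.trans
      (Equiv.sumCongr (equivOnes n) (equivMin n hn).symm)
  have hcard : Nat.card (Nat.Partition (n + 1)) =
      Nat.card (Nat.Partition n) +
        Nat.card {π : n.Partition //
          ∃ s ∈ π.parts, (∀ t ∈ π.parts, s ≤ t) ∧ π.parts.count s = 1} := by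
    rw [Nat.card_congr e, Nat.card_sum]
  push_cast [hcard]
  ring
end

section
/- For every positive integer n, there is a bijection between the set of partitions of n whose smallest part occurs exactly once and the set of partitions of n+1 having no part equal to 1 (given by adding 1 to the unique smallest part). -/
namespace Stmt4Aux

open Multiset

lemma parts_nonempty {m : ℕ} (hm : 0 < m) (π : m.Partition) :
    π.parts.toFinset.Nonempty := by
  have h0 : π.parts ≠ 0 := by
    intro h
    have := π.parts_sum
    rw [h] at this
    simp at this
    omega
  obtain ⟨a, ha⟩ := Multiset.exists_mem_of_ne_zero h0
  exact ⟨a, Multiset.mem_toFinset.2 ha⟩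

noncomputable def mp {m : ℕ} (hm : 0 < m) (π : m.Partition) : ℕ :=
  π.parts.toFinset.min' (parts_nonempty hm π)

lemma mp_mem {m : ℕ} (hm : 0 < m) (π : m.Partition) : mp hm π ∈ π.parts :=
  Multiset.mem_toFinset.1 (Finset.min'_mem _ _)

lemma mp_le {m : ℕ} (hm : 0 < m) (π : m.Partition) {t : ℕ} (ht : t ∈ π.parts) :
    mp hm π ≤ t :=
  Finset.min'_le _ _ (Multiset.mem_toFinset.2 ht)

lemma mp_eq {m : ℕ} (hm : 0 < m) (π : m.Partition) {s : ℕ} (hs : s ∈ π.parts)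
    (h : ∀ t ∈ π.parts, s ≤ t) : mp hm π = s :=
  le_antisymm (Finset.min'_le _ _ (Multiset.mem_toFinset.2 hs)) (h _ (mp_mem hm π))

def addOne {m : ℕ} (π : m.Partition) (s : ℕ) (hs : s ∈ π.parts) : (m + 1).Partition where
  parts := (s + 1) ::ₘ π.parts.erase s
  parts_pos := by
    intro a ha
    rcases Multiset.mem_cons.1 ha with rfl | h
    · omega
    · exact π.parts_pos (Multiset.mem_of_mem_erase h)
  parts_sum := by
    have hsum : s + (π.parts.erase s).sum = m := by
      rw [← Multiset.sum_cons, Multiset.cons_erase hs, π.parts_sum]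
    rw [Multiset.sum_cons]
    omega

def subOne {m : ℕ} (π : (m + 1).Partition) (t : ℕ) (ht : t ∈ π.parts) (ht2 : 2 ≤ t) :
    m.Partition where
  parts := (t - 1) ::ₘ π.parts.erase t
  parts_pos := by
    intro a ha
    rcases Multiset.mem_cons.1 ha with rfl | h
    · omega
    · exact π.parts_pos (Multiset.mem_of_mem_erase h)
  parts_sum := by
    have hsum : t + (π.parts.erase t).sum = m + 1 := by
      rw [← Multiset.sum_cons, Multiset.cons_erase ht, π.parts_sum]
    rw [Multiset.sum_cons]
    omega

end Stmt4Aux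

open Stmt4Aux Multiset in
/-- There is a bijection between the partitions of `n` whose smallest part occurs exactly
once and the partitions of `n+1` with no part equal to `1`, given by adding `1` to the
unique smallest part. -/
theorem stmt_4 (n : ℕ) (hn : 0 < n) :
    ∃ e : {π : n.Partition //
        ∃ s ∈ π.parts, (∀ t ∈ π.parts, s ≤ t) ∧ π.parts.count s = 1}
      ≃ {π : (n + 1).Partition // 1 ∉ π.parts},
      ∀ π s, s ∈ π.1.parts → (∀ t ∈ π.1.parts, s ≤ t) →
        ((e π : {π : (n + 1).Partition // 1 ∉ π.parts}) : (n + 1).Partition).parts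
          = (s + 1) ::ₘ π.1.parts.erase s := by
  have hn1 : 0 < n + 1 := by omega
  -- facts about elements of the A-side subtype
  have keyA : ∀ π : {π : n.Partition //
      ∃ s ∈ π.parts, (∀ t ∈ π.parts, s ≤ t) ∧ π.parts.count s = 1},
      ∀ t ∈ π.1.parts.erase (mp hn π.1), mp hn π.1 < t := by
    rintro ⟨π, s, hs, hmin, hcount⟩ t ht
    have hse : mp hn π = s := mp_eq hn π hs hmin
    rw [hse] at ht ⊢
    have ht' : t ∈ π.parts := Multiset.mem_of_mem_erase ht
    have hle : s ≤ t := hmin t ht'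
    rcases eq_or_lt_of_le hle with rfl | h
    · exfalso
      have ht2 : s ∈ π.parts.erase s := ht
      have h0 : (π.parts.erase s).count s = 0 := by
        rw [Multiset.count_erase_self, hcount]
      have := Multiset.count_pos.2 ht2
      omega
    · exact h
  refine ⟨⟨fun π => ⟨addOne π.1 (mp hn π.1) (mp_mem hn π.1), ?_⟩,
      fun ρ => ⟨subOne ρ.1 (mp hn1 ρ.1) (mp_mem hn1 ρ.1) ?_, ?_⟩, ?_, ?_⟩, ?_⟩
  · -- no part equal to 1
    intro h1
    rcases Multiset.mem_cons.1 h1 with h | h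
    · have := (π.1).parts_pos (mp_mem hn π.1)
      omega
    · have := keyA π 1 h
      have := (π.1).parts_pos (mp_mem hn π.1)
      omega
  · -- min of ρ is ≥ 2
    have h1 := ρ.1.parts_pos (mp_mem hn1 ρ.1)
    have h2 : mp hn1 ρ.1 ≠ 1 := by
      intro h
      apply ρ.2
      have hm := mp_mem hn1 ρ.1
      rw [h] at hm
      exact hm
    omega
  · -- subOne is in the A-set: witness t-1
    refine ⟨mp hn1 ρ.1 - 1, Multiset.mem_cons_self _ _, ?_, ?_⟩
    · intro t ht
      rcases Multiset.mem_cons.1 ht with rfl | h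
      · exact le_refl _
      · have := mp_le hn1 ρ.1 (Multiset.mem_of_mem_erase h)
        omega
    · -- count = 1
      have hnot : mp hn1 ρ.1 - 1 ∉ ρ.1.parts.erase (mp hn1 ρ.1) := by
        intro h
        have := mp_le hn1 ρ.1 (Multiset.mem_of_mem_erase h)
        have h1 := ρ.1.parts_pos (mp_mem hn1 ρ.1)
        omega
      show Multiset.count (mp hn1 ρ.1 - 1)
        ((mp hn1 ρ.1 - 1) ::ₘ ρ.1.parts.erase (mp hn1 ρ.1)) = 1
      rw [Multiset.count_cons_self, Multiset.count_eq_zero.2 hnot]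
  · -- left inverse
    rintro ⟨π, hπ⟩
    apply Subtype.ext
    apply Nat.Partition.ext
    set s := mp hn π with hs
    have hmem := mp_mem hn π
    have hmin : mp hn1 (addOne π s hmem) = s + 1 := by
      apply mp_eq
      · exact Multiset.mem_cons_self _ _
      · intro t ht
        rcases Multiset.mem_cons.1 ht with rfl | h
        · exact le_refl _
        · have hk : s < t := keyA ⟨π, hπ⟩ t h
          omega
    show ((mp hn1 (addOne π s hmem) - 1) ::ₘ
      (addOne π s hmem).parts.erase (mp hn1 (addOne π s hmem))) = π.parts
    rw [hmin]
    show (s + 1 - 1) ::ₘ ((s + 1) ::ₘ π.parts.erase s).erase (s + 1) = π.parts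
    rw [Multiset.erase_cons_head]
    simp only [Nat.add_sub_cancel]
    exact Multiset.cons_erase hmem
  · -- right inverse
    rintro ⟨ρ, hρ⟩
    apply Subtype.ext
    apply Nat.Partition.ext
    set t := mp hn1 ρ with htdef
    have hmem := mp_mem hn1 ρ
    have ht2 : 2 ≤ t := by
      have h1 := ρ.parts_pos hmem
      have h2 : t ≠ 1 := by
        intro h
        apply hρ
        rw [htdef] at h
        rw [h] at hmem
        exact hmem
      omega
    have hmin : mp hn (subOne ρ t hmem ht2) = t - 1 := by
      apply mp_eq
      · exact Multiset.mem_cons_self _ _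
      · intro u hu
        rcases Multiset.mem_cons.1 hu with rfl | h
        · exact le_refl _
        · have := mp_le hn1 ρ (Multiset.mem_of_mem_erase h)
          omega
    show ((mp hn (subOne ρ t hmem ht2) + 1) ::ₘ
      (subOne ρ t hmem ht2).parts.erase (mp hn (subOne ρ t hmem ht2))) = ρ.parts
    rw [hmin]
    show (t - 1 + 1) ::ₘ ((t - 1) ::ₘ ρ.parts.erase t).erase (t - 1) = ρ.parts
    rw [Multiset.erase_cons_head]
    have : t - 1 + 1 = t := by omega
    rw [this]
    exact Multiset.cons_erase hmem
  · -- the characterization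
    intro π s hs hminim
    have : mp hn π.1 = s := mp_eq hn π.1 hs hminim
    show ((mp hn π.1 + 1) ::ₘ π.1.parts.erase (mp hn π.1)) = (s + 1) ::ₘ π.1.parts.erase s
    rw [this]
end

section
/- For every positive integer n, there is a bijection between the set of partitions of n whose smallest part occurs at least twice and the set of partitions of 2n whose largest part minus smallest part equals n (given by adding n to one copy of the smallest part). -/
open Multiset

namespace Stmt5Aux

abbrev A (n : ℕ) := {π : n.Partition //
    ∃ s ∈ π.parts, (∀ t ∈ π.parts, s ≤ t) ∧ 2 ≤ π.parts.count s}

abbrev B (n : ℕ) := {π : (2 * n).Partition //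
    ∃ M ∈ π.parts, ∃ s ∈ π.parts,
      (∀ t ∈ π.parts, t ≤ M) ∧ (∀ t ∈ π.parts, s ≤ t) ∧ M = s + n}

variable {n : ℕ}

noncomputable def sA (π : A n) : ℕ := π.2.choose

lemma sA_mem (π : A n) : sA π ∈ π.1.parts := π.2.choose_spec.1
lemma sA_min (π : A n) : ∀ t ∈ π.1.parts, sA π ≤ t := π.2.choose_spec.2.1
lemma sA_count (π : A n) : 2 ≤ π.1.parts.count (sA π) := π.2.choose_spec.2.2

noncomputable def MB (π : B n) : ℕ := π.2.choose
lemma MB_mem (π : B n) : MB π ∈ π.1.parts := π.2.choose_spec.1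
noncomputable def sB (π : B n) : ℕ := π.2.choose_spec.2.choose
lemma sB_mem (π : B n) : sB π ∈ π.1.parts := π.2.choose_spec.2.choose_spec.1
lemma MB_max (π : B n) : ∀ t ∈ π.1.parts, t ≤ MB π := π.2.choose_spec.2.choose_spec.2.1
lemma sB_min (π : B n) : ∀ t ∈ π.1.parts, sB π ≤ t := π.2.choose_spec.2.choose_spec.2.2.1
lemma MB_eq (π : B n) : MB π = sB π + n := π.2.choose_spec.2.choose_spec.2.2.2

lemma part_le (π : n.Partition) {t : ℕ} (ht : t ∈ π.parts) : t ≤ n := by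
  have := single_le_sum (fun x _ => Nat.zero_le x) t ht
  rwa [π.parts_sum] at this

noncomputable def fwdP (hn : 0 < n) (π : A n) : (2 * n).Partition where
  parts := (sA π + n) ::ₘ π.1.parts.erase (sA π)
  parts_pos := by
    intro i hi
    rcases mem_cons.1 hi with h | h
    · omega
    · exact π.1.parts_pos (mem_of_mem_erase h)
  parts_sum := by
    have h1 : (sA π) ::ₘ π.1.parts.erase (sA π) = π.1.parts := cons_erase (sA_mem π)
    have h2 : sA π + (π.1.parts.erase (sA π)).sum = n := by
      have := congrArg Multiset.sum h1
      rwa [sum_cons, π.1.parts_sum] at this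
    rw [sum_cons]; omega

noncomputable def fwd (hn : 0 < n) (π : A n) : B n :=
  ⟨fwdP hn π, sA π + n, mem_cons_self _ _, sA π, by
      have hmem : sA π ∈ π.1.parts.erase (sA π) := by
        rw [← count_pos, count_erase_self]
        have := sA_count π; omega
      exact mem_cons_of_mem hmem,
    fun t ht => by
      rcases mem_cons.1 ht with h | h
      · omega
      · have h1 : t ≤ n := part_le π.1 (mem_of_mem_erase h)
        have h2 : 0 < sA π := π.1.parts_pos (sA_mem π)
        omega,
    fun t ht => by
      rcases mem_cons.1 ht with h | h
      · omega
      · exact sA_min π _ (mem_of_mem_erase h),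
    rfl⟩

noncomputable def bwdP (hn : 0 < n) (π : B n) : n.Partition where
  parts := sB π ::ₘ π.1.parts.erase (MB π)
  parts_pos := by
    intro i hi
    rcases mem_cons.1 hi with h | h
    · subst h; exact π.1.parts_pos (sB_mem π)
    · exact π.1.parts_pos (mem_of_mem_erase h)
  parts_sum := by
    have h1 : (MB π) ::ₘ π.1.parts.erase (MB π) = π.1.parts := cons_erase (MB_mem π)
    have h2 : MB π + (π.1.parts.erase (MB π)).sum = 2 * n := by
      have := congrArg Multiset.sum h1
      rwa [sum_cons, π.1.parts_sum] at this
    have h3 := MB_eq π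
    rw [sum_cons]; omega

lemma sB_ne_MB (hn : 0 < n) (π : B n) : sB π ≠ MB π := by
  have := MB_eq π; omega

noncomputable def bwd (hn : 0 < n) (π : B n) : A n :=
  ⟨bwdP hn π, sB π, mem_cons_self _ _,
    fun t ht => by
      rcases mem_cons.1 ht with h | h
      · omega
      · exact sB_min π _ (mem_of_mem_erase h),
    by
      show 2 ≤ count (sB π) (sB π ::ₘ π.1.parts.erase (MB π))
      rw [count_cons_self, count_erase_of_ne (sB_ne_MB hn π)]
      have : 0 < count (sB π) π.1.parts := count_pos.2 (sB_mem π)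
      omega⟩

lemma fwd_parts (hn : 0 < n) (π : A n) :
    (fwd hn π).1.parts = (sA π + n) ::ₘ π.1.parts.erase (sA π) := rfl

lemma bwd_parts (hn : 0 < n) (π : B n) :
    (bwd hn π).1.parts = sB π ::ₘ π.1.parts.erase (MB π) := rfl

lemma left_inv (hn : 0 < n) (π : A n) : bwd hn (fwd hn π) = π := by
  set σ := fwd hn π with hσ
  have hM : MB σ = sA π + n := by
    have h1 : sA π + n ≤ MB σ := MB_max σ _ (mem_cons_self _ _)
    have h2 := MB_mem σ
    rw [fwd_parts] at h2
    rcases mem_cons.1 h2 with h | h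
    · exact h
    · have h3 : MB σ ≤ n := part_le π.1 (mem_of_mem_erase h)
      have h4 : 0 < sA π := π.1.parts_pos (sA_mem π)
      omega
  have hs : sB σ = sA π := by
    have := MB_eq σ; omega
  apply Subtype.ext
  ext1
  rw [bwd_parts, hs, hM, fwd_parts, erase_cons_head, cons_erase (sA_mem π)]

lemma right_inv (hn : 0 < n) (σ : B n) : fwd hn (bwd hn σ) = σ := by
  set π := bwd hn σ with hπ
  have hs : sA π = sB σ := by
    have h1 : sA π ≤ sB σ := sA_min π _ (by rw [bwd_parts]; exact mem_cons_self _ _)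
    have h2 := sA_mem π
    rw [bwd_parts] at h2
    rcases mem_cons.1 h2 with h | h
    · exact h
    · exact le_antisymm h1 (sB_min σ _ (mem_of_mem_erase h))
  apply Subtype.ext
  ext1
  rw [fwd_parts, hs, ← MB_eq σ, bwd_parts, erase_cons_head, cons_erase (MB_mem σ)]

end Stmt5Aux

/-- There is a bijection between the partitions of `n` whose smallest part occurs at least
twice and the partitions of `2n` whose largest part exceeds its smallest part by `n`,
given by adding `n` to one copy of the smallest part. -/
theorem stmt_5 (n : ℕ) (hn : 0 < n) :
    ∃ e : {π : n.Partition //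
        ∃ s ∈ π.parts, (∀ t ∈ π.parts, s ≤ t) ∧ 2 ≤ π.parts.count s}
      ≃ {π : (2 * n).Partition //
        ∃ M ∈ π.parts, ∃ s ∈ π.parts,
          (∀ t ∈ π.parts, t ≤ M) ∧ (∀ t ∈ π.parts, s ≤ t) ∧ M = s + n},
      ∀ π s, s ∈ π.1.parts → (∀ t ∈ π.1.parts, s ≤ t) →
        ((e π : {π : (2 * n).Partition //
            ∃ M ∈ π.parts, ∃ s ∈ π.parts,
              (∀ t ∈ π.parts, t ≤ M) ∧ (∀ t ∈ π.parts, s ≤ t) ∧ M = s + n})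
          : (2 * n).Partition).parts
          = (s + n) ::ₘ π.1.parts.erase s := by
  classical
  refine ⟨⟨Stmt5Aux.fwd hn, Stmt5Aux.bwd hn, Stmt5Aux.left_inv hn, Stmt5Aux.right_inv hn⟩,
    ?_⟩
  intro π s hs hmin
  have hse : s = Stmt5Aux.sA π :=
    le_antisymm (hmin _ (Stmt5Aux.sA_mem π)) (Stmt5Aux.sA_min π _ hs)
  simp only [Equiv.coe_fn_mk]
  rw [Stmt5Aux.fwd_parts, hse]
end

section
/- For every positive integer n, the number of partitions of 2n with largest part minus smallest part equal to n equals 2·p(n) − p(n+1), where p is the partition function. -/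
open Multiset

namespace Stmt6Aux

lemma mem_le_sum {s : Multiset ℕ} {a : ℕ} (h : a ∈ s) : a ≤ s.sum := by
  have := congrArg Multiset.sum (Multiset.cons_erase h)
  simp [Multiset.sum_cons] at this
  omega

lemma parts_ne_zero {m : ℕ} (hm : 0 < m) (π : m.Partition) : π.parts ≠ 0 := by
  intro h
  have := π.parts_sum
  rw [h] at this
  simp at this
  omega

/-- the smallest part -/
noncomputable def minP {m : ℕ} (hm : 0 < m) (π : m.Partition) : ℕ :=
  π.parts.toFinset.min' (by
    rw [Finset.nonempty_iff_ne_empty]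
    simp [Multiset.toFinset_eq_empty, parts_ne_zero hm π])

lemma minP_mem {m : ℕ} (hm : 0 < m) (π : m.Partition) : minP hm π ∈ π.parts := by
  have := Finset.min'_mem π.parts.toFinset (by
    rw [Finset.nonempty_iff_ne_empty]
    simp [Multiset.toFinset_eq_empty, parts_ne_zero hm π])
  simpa [minP] using this

lemma minP_le {m : ℕ} (hm : 0 < m) (π : m.Partition) {t : ℕ} (ht : t ∈ π.parts) :
    minP hm π ≤ t :=
  Finset.min'_le _ _ (by simpa using ht)

lemma minP_eq {m : ℕ} (hm : 0 < m) (π : m.Partition) {s : ℕ} (hs : s ∈ π.parts)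
    (hle : ∀ t ∈ π.parts, s ≤ t) : minP hm π = s :=
  le_antisymm (minP_le hm π hs) (hle _ (minP_mem hm π))

lemma minP_pos {m : ℕ} (hm : 0 < m) (π : m.Partition) : 0 < minP hm π :=
  π.parts_pos (minP_mem hm π)

/-- replace one copy of part `a` by `b` -/
def movePart {m : ℕ} (π : m.Partition) (a b k : ℕ) (ha : a ∈ π.parts) (hb : 0 < b)
    (hk : m + b = k + a) : k.Partition where
  parts := b ::ₘ π.parts.erase a
  parts_pos := by
    intro i hi
    rcases Multiset.mem_cons.1 hi with h | h
    · omega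
    · exact π.parts_pos (Multiset.mem_of_mem_erase h)
  parts_sum := by
    have h := congrArg Multiset.sum (Multiset.cons_erase ha)
    rw [Multiset.sum_cons, π.parts_sum] at h
    rw [Multiset.sum_cons]
    omega

@[simp] lemma movePart_parts {m : ℕ} (π : m.Partition) (a b k : ℕ) (ha : a ∈ π.parts)
    (hb : 0 < b) (hk : m + b = k + a) :
    (movePart π a b k ha hb hk).parts = b ::ₘ π.parts.erase a := rfl

variable {n : ℕ}

/-- the predicate in the statement -/
def P (n : ℕ) (π : (2 * n).Partition) : Prop :=
  ∃ M ∈ π.parts, ∃ s ∈ π.parts,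
    (∀ t ∈ π.parts, t ≤ M) ∧ (∀ t ∈ π.parts, s ≤ t) ∧ M = s + n

/-- smallest part repeated -/
def Q (hn : 0 < n) (π : n.Partition) : Prop := 2 ≤ π.parts.count (minP hn π)

lemma h2n (hn : 0 < n) : 0 < 2 * n := by omega

lemma P_mem (hn : 0 < n) {π : (2 * n).Partition} (h : P n π) :
    minP (h2n hn) π + n ∈ π.parts := by
  obtain ⟨M, hM, s, hs, _hmax, hmin, hMs⟩ := h
  rw [minP_eq (h2n hn) π hs hmin, ← hMs]
  exact hM

lemma P_min_plus_ne (hn : 0 < n) (s : ℕ) : s ≠ s + n := by omega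

/-- forward map of the first bijection -/
noncomputable def e1fun (hn : 0 < n) (π : {π : (2 * n).Partition // P n π}) :
    {π : n.Partition // Q hn π} := by
  refine ⟨movePart π.1 (minP (h2n hn) π.1 + n) (minP (h2n hn) π.1) n (P_mem hn π.2)
    (minP_pos _ _) (by omega), ?_⟩
  set s := minP (h2n hn) π.1 with hs
  have hmin : minP hn (movePart π.1 (s + n) s n (P_mem hn π.2) (minP_pos _ _) (by omega)) = s := by
    apply minP_eq
    · simp
    · intro t ht
      simp only [movePart_parts, Multiset.mem_cons] at ht
      rcases ht with h | h
      · omega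
      · exact minP_le _ _ (Multiset.mem_of_mem_erase h)
  rw [Q, hmin]
  simp only [movePart_parts, ← hs, Multiset.count_cons_self]
  rw [Multiset.count_erase_of_ne (P_min_plus_ne hn s)]
  have : 1 ≤ Multiset.count s π.1.parts := Multiset.one_le_count_iff_mem.2 (minP_mem _ _)
  omega

/-- backward map of the first bijection -/
noncomputable def e1inv (hn : 0 < n) (π : {π : n.Partition // Q hn π}) :
    {π : (2 * n).Partition // P n π} := by
  refine ⟨movePart π.1 (minP hn π.1) (minP hn π.1 + n) (2 * n) (minP_mem _ _)
    (by have := minP_pos hn π.1; omega) (by omega), ?_⟩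
  set s := minP hn π.1 with hs
  refine ⟨s + n, by simp [hs], s, ?_, ?_, ?_, rfl⟩
  · simp only [movePart_parts, Multiset.mem_cons]
    right
    have := π.2
    rw [Q, ← hs] at this
    rw [← Multiset.count_pos, Multiset.count_erase_self]
    omega
  · intro t ht
    simp only [movePart_parts, Multiset.mem_cons] at ht
    rcases ht with h | h
    · omega
    · have h1 : t ∈ π.1.parts := Multiset.mem_of_mem_erase h
      have h2 : t ≤ π.1.parts.sum := mem_le_sum h1
      rw [π.1.parts_sum] at h2
      omega
  · intro t ht
    simp only [movePart_parts, Multiset.mem_cons] at ht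
    rcases ht with h | h
    · omega
    · exact minP_le _ _ (Multiset.mem_of_mem_erase h)

noncomputable def e1 (hn : 0 < n) :
    {π : (2 * n).Partition // P n π} ≃ {π : n.Partition // Q hn π} where
  toFun := e1fun hn
  invFun := e1inv hn
  left_inv := by
    rintro ⟨π, h⟩
    apply Subtype.ext
    apply Nat.Partition.ext
    set s := minP (h2n hn) π with hs
    have hmin : minP hn (e1fun hn ⟨π, h⟩).1 = s := by
      apply minP_eq
      · simp [e1fun, hs]
      · intro t ht
        simp only [e1fun, movePart_parts, Multiset.mem_cons] at ht
        rcases ht with h' | h'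
        · omega
        · exact minP_le _ _ (Multiset.mem_of_mem_erase h')
    have hrfl : (e1inv hn (e1fun hn ⟨π, h⟩)).1.parts
        = (minP hn (e1fun hn ⟨π, h⟩).1 + n) ::ₘ
          (e1fun hn ⟨π, h⟩).1.parts.erase (minP hn (e1fun hn ⟨π, h⟩).1) := rfl
    have hrfl2 : (e1fun hn ⟨π, h⟩).1.parts = s ::ₘ π.parts.erase (s + n) := rfl
    rw [hrfl, hmin, hrfl2, Multiset.erase_cons_head, Multiset.cons_erase (P_mem hn h)]
  right_inv := by
    rintro ⟨π, h⟩
    apply Subtype.ext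
    apply Nat.Partition.ext
    set s := minP hn π with hs
    have hsmem : s ∈ π.parts.erase s := by
      rw [← Multiset.count_pos, Multiset.count_erase_self]
      have := h
      rw [Q, ← hs] at this
      omega
    have hmin : minP (h2n hn) (e1inv hn ⟨π, h⟩).1 = s := by
      apply minP_eq
      · simp only [e1inv, movePart_parts, Multiset.mem_cons]
        right
        exact hsmem
      · intro t ht
        simp only [e1inv, movePart_parts, Multiset.mem_cons] at ht
        rcases ht with h' | h'
        · omega
        · exact minP_le _ _ (Multiset.mem_of_mem_erase h')
    have hrfl : (e1fun hn (e1inv hn ⟨π, h⟩)).1.parts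
        = minP (h2n hn) (e1inv hn ⟨π, h⟩).1 ::ₘ
          (e1inv hn ⟨π, h⟩).1.parts.erase (minP (h2n hn) (e1inv hn ⟨π, h⟩).1 + n) := rfl
    have hrfl2 : (e1inv hn ⟨π, h⟩).1.parts = (s + n) ::ₘ π.parts.erase s := rfl
    rw [hrfl, hmin, hrfl2, Multiset.erase_cons_head, Multiset.cons_erase (minP_mem hn π)]


lemma hn1 (hn : 0 < n) : 0 < n + 1 := by omega

lemma notQ_count (hn : 0 < n) {π : n.Partition} (h : ¬ Q hn π) :
    π.parts.count (minP hn π) = 1 := by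
  have h1 : 1 ≤ π.parts.count (minP hn π) := Multiset.one_le_count_iff_mem.2 (minP_mem _ _)
  rw [Q, not_le] at h
  omega

lemma minP_one_count (hn : 0 < n) {π : n.Partition} (h : ¬ Q hn π) :
    Multiset.count (minP hn π) (π.parts.erase (minP hn π)) = 0 := by
  rw [Multiset.count_erase_self, notQ_count hn h]

lemma one_notmem (hn : 0 < n) {π : n.Partition} (h : ¬ Q hn π) :
    (1 : ℕ) ∉ (minP hn π + 1) ::ₘ π.parts.erase (minP hn π) := by
  intro hmem
  have hspos := minP_pos hn π
  rcases Multiset.mem_cons.1 hmem with h1 | h1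
  · omega
  · have h2 : (1 : ℕ) ∈ π.parts := Multiset.mem_of_mem_erase h1
    have h3 : minP hn π = 1 := le_antisymm (minP_le hn π h2) hspos
    have h4 := minP_one_count hn h
    rw [h3] at h1
    rw [← Multiset.count_pos] at h1
    rw [h3] at h4
    omega

lemma erase_min_ge (hn : 0 < n) {π : n.Partition} (h : ¬ Q hn π) {u : ℕ}
    (hu : u ∈ π.parts.erase (minP hn π)) : minP hn π + 1 ≤ u := by
  have h1 := minP_le hn π (Multiset.mem_of_mem_erase hu)
  rcases Nat.lt_or_ge (minP hn π) u with h2 | h2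
  · omega
  · have h3 : u = minP hn π := by omega
    rw [h3, ← Multiset.count_pos, minP_one_count hn h] at hu
    omega

/-- forward map of the second bijection -/
noncomputable def e2fun (hn : 0 < n) (π : {π : n.Partition // ¬ Q hn π}) :
    {π : (n + 1).Partition // 1 ∉ π.parts} :=
  ⟨movePart π.1 (minP hn π.1) (minP hn π.1 + 1) (n + 1) (minP_mem _ _)
    (by omega) (by omega), one_notmem hn π.2⟩

lemma minP_ge_two (hn : 0 < n) {π : (n + 1).Partition} (h : 1 ∉ π.parts) :
    2 ≤ minP (hn1 hn) π := by
  have h1 := minP_pos (hn1 hn) π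
  have h2 : minP (hn1 hn) π ≠ 1 := by
    intro he
    apply h
    have hm := minP_mem (hn1 hn) π
    rw [he] at hm
    exact hm
  omega

/-- backward map of the second bijection -/
noncomputable def e2inv (hn : 0 < n) (π : {π : (n + 1).Partition // 1 ∉ π.parts}) :
    {π : n.Partition // ¬ Q hn π} := by
  refine ⟨movePart π.1 (minP (hn1 hn) π.1) (minP (hn1 hn) π.1 - 1) n (minP_mem _ _)
    (by have := minP_ge_two hn π.2; omega) (by have := minP_ge_two hn π.2; omega), ?_⟩
  have ht2 := minP_ge_two hn π.2
  have hnotmem : minP (hn1 hn) π.1 - 1 ∉ π.1.parts := by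
    intro hm
    have := minP_le (hn1 hn) π.1 hm
    omega
  have hmin : minP hn (movePart π.1 (minP (hn1 hn) π.1) (minP (hn1 hn) π.1 - 1) n (minP_mem _ _)
      (by have := minP_ge_two hn π.2; omega) (by have := minP_ge_two hn π.2; omega))
      = minP (hn1 hn) π.1 - 1 := by
    apply minP_eq
    · simp
    · intro u hu
      rcases Multiset.mem_cons.1 (by simpa using hu) with h' | h'
      · omega
      · have := minP_le (hn1 hn) π.1 (Multiset.mem_of_mem_erase h')
        omega
  rw [Q, hmin, not_le]
  simp only [movePart_parts, Multiset.count_cons_self]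
  have hcz : Multiset.count (minP (hn1 hn) π.1 - 1) (π.1.parts.erase (minP (hn1 hn) π.1)) = 0 := by
    rw [Multiset.count_eq_zero]
    exact fun hm => hnotmem (Multiset.mem_of_mem_erase hm)
  omega

noncomputable def e2 (hn : 0 < n) :
    {π : n.Partition // ¬ Q hn π} ≃ {π : (n + 1).Partition // 1 ∉ π.parts} where
  toFun := e2fun hn
  invFun := e2inv hn
  left_inv := by
    rintro ⟨π, h⟩
    apply Subtype.ext
    apply Nat.Partition.ext
    have hmin : minP (hn1 hn) (e2fun hn ⟨π, h⟩).1 = minP hn π + 1 := by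
      apply minP_eq
      · simp [e2fun]
      · intro u hu
        rcases Multiset.mem_cons.1 (by simpa [e2fun] using hu) with h' | h'
        · omega
        · exact erase_min_ge hn h h'
    have hrfl : (e2inv hn (e2fun hn ⟨π, h⟩)).1.parts
        = (minP (hn1 hn) (e2fun hn ⟨π, h⟩).1 - 1) ::ₘ
          (e2fun hn ⟨π, h⟩).1.parts.erase (minP (hn1 hn) (e2fun hn ⟨π, h⟩).1) := rfl
    have hrfl2 : (e2fun hn ⟨π, h⟩).1.parts = (minP hn π + 1) ::ₘ π.parts.erase (minP hn π) := rfl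
    rw [hrfl, hmin, hrfl2, Multiset.erase_cons_head, Nat.add_sub_cancel,
      Multiset.cons_erase (minP_mem hn π)]
  right_inv := by
    rintro ⟨π, h⟩
    apply Subtype.ext
    apply Nat.Partition.ext
    have ht2 : 2 ≤ minP (hn1 hn) π := minP_ge_two hn h
    have hmin : minP hn (e2inv hn ⟨π, h⟩).1 = minP (hn1 hn) π - 1 := by
      apply minP_eq
      · simp [e2inv]
      · intro u hu
        rcases Multiset.mem_cons.1 (by simpa [e2inv] using hu) with h' | h'
        · omega
        · have := minP_le (hn1 hn) π (Multiset.mem_of_mem_erase h')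
          omega
    have hrfl : (e2fun hn (e2inv hn ⟨π, h⟩)).1.parts
        = (minP hn (e2inv hn ⟨π, h⟩).1 + 1) ::ₘ
          (e2inv hn ⟨π, h⟩).1.parts.erase (minP hn (e2inv hn ⟨π, h⟩).1) := rfl
    have hrfl2 : (e2inv hn ⟨π, h⟩).1.parts
        = (minP (hn1 hn) π - 1) ::ₘ π.parts.erase (minP (hn1 hn) π) := rfl
    rw [hrfl, hmin, hrfl2, Multiset.erase_cons_head, Nat.sub_add_cancel (by omega),
      Multiset.cons_erase (minP_mem (hn1 hn) π)]

/-- third bijection: partitions of n+1 containing a 1 vs partitions of n -/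
def e3 : {π : (n + 1).Partition // 1 ∈ π.parts} ≃ n.Partition where
  toFun π := ⟨π.1.parts.erase 1,
    fun hi => π.1.parts_pos (Multiset.mem_of_mem_erase hi),
    by
      have h := congrArg Multiset.sum (Multiset.cons_erase π.2)
      rw [Multiset.sum_cons, π.1.parts_sum] at h
      omega⟩
  invFun π := ⟨⟨1 ::ₘ π.parts,
    fun hi => by
      rcases Multiset.mem_cons.1 hi with h | h
      · omega
      · exact π.parts_pos h,
    by rw [Multiset.sum_cons, π.parts_sum, add_comm]⟩, Multiset.mem_cons_self _ _⟩
  left_inv := by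
    rintro ⟨π, h⟩
    apply Subtype.ext
    apply Nat.Partition.ext
    exact Multiset.cons_erase h
  right_inv := by
    intro π
    apply Nat.Partition.ext
    exact Multiset.erase_cons_head _ _

lemma card_split (α : Type) [Finite α] (p : α → Prop) :
    Nat.card {x // p x} + Nat.card {x // ¬ p x} = Nat.card α := by
  classical
  cases nonempty_fintype α
  simp only [Nat.card_eq_fintype_card]
  rw [Fintype.card_subtype_compl]
  have := Fintype.card_subtype_le p
  omega

end Stmt6Aux

/-- The number of partitions of `2n` with largest part exceeding the smallest part by `n`
equals `2·p(n) − p(n+1)`. -/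
theorem stmt_6 (n : ℕ) (hn : 0 < n) :
    (Nat.card {π : (2 * n).Partition //
        ∃ M ∈ π.parts, ∃ s ∈ π.parts,
          (∀ t ∈ π.parts, t ≤ M) ∧ (∀ t ∈ π.parts, s ≤ t) ∧ M = s + n} : ℤ)
      = 2 * (Nat.card (Nat.Partition n) : ℤ) - (Nat.card (Nat.Partition (n + 1)) : ℤ) := by
  open Stmt6Aux in
  have hA : Nat.card {π : (2 * n).Partition // P n π}
      = Nat.card {π : n.Partition // Q hn π} := Nat.card_congr (e1 hn)
  have hsplit1 := card_split (Nat.Partition n) (Q hn)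
  have hC : Nat.card {π : n.Partition // ¬ Q hn π}
      = Nat.card {π : (n + 1).Partition // 1 ∉ π.parts} := Nat.card_congr (e2 hn)
  have hsplit2 := card_split (Nat.Partition (n + 1)) (fun π => 1 ∈ π.parts)
  have hD : Nat.card {π : (n + 1).Partition // 1 ∈ π.parts}
      = Nat.card (Nat.Partition n) := Nat.card_congr e3
  have : Nat.card {π : (2 * n).Partition // P n π} + Nat.card (Nat.Partition (n + 1))
      = 2 * Nat.card (Nat.Partition n) := by omega
  show (Nat.card {π : (2 * n).Partition // P n π} : ℤ) = _
  omega
end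

section
/- For |q| < 1, ∑_{k≥1} q^{2k}/(q^k;q)_∞ = 2/(q;q)_∞ − 1/(q·(q;q)_∞) + 1/q − 1. -/
open Real Filter Topology

set_option maxHeartbeats 1000000

private lemma fac_pos' {q : ℝ} (hq : |q| < 1) (k j : ℕ) : 0 < 1 - q ^ (k + 1) * q ^ j := by
  have h1 : |q ^ (k + 1) * q ^ j| < 1 := by
    rw [abs_mul, abs_pow, abs_pow, ← pow_add]
    exact pow_lt_one₀ (abs_nonneg q) hq (by omega)
  have := (abs_lt.mp h1).2
  linarith

private lemma summable_log' {q : ℝ} (hq : |q| < 1) (k : ℕ) :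
    Summable fun j : ℕ => Real.log (1 - q ^ (k + 1) * q ^ j) := by
  have hq1 : (0:ℝ) < 1 - |q| := by
    have := abs_nonneg q; linarith
  apply Summable.of_abs
  refine Summable.of_nonneg_of_le (fun j => abs_nonneg _) (fun j => ?_)
    (Summable.mul_left (|q| ^ (k + 1) / (1 - |q|))
      (summable_geometric_of_lt_one (abs_nonneg q) hq))
  have hxabs : |q ^ (k + 1) * q ^ j| = |q| ^ (k + 1) * |q| ^ j := by
    rw [abs_mul, abs_pow, abs_pow]
  have hxlt : |q ^ (k + 1) * q ^ j| < 1 := by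
    rw [hxabs, ← pow_add]
    exact pow_lt_one₀ (abs_nonneg q) hq (by omega)
  have hle : |q ^ (k + 1) * q ^ j| ≤ |q| := by
    rw [hxabs, ← pow_add]
    calc |q| ^ (k + 1 + j) ≤ |q| ^ 1 :=
          pow_le_pow_of_le_one (abs_nonneg q) hq.le (by omega)
      _ = |q| := pow_one _
  have h0 := Real.abs_log_sub_add_sum_range_le hxlt 0
  simp only [Finset.range_zero, Finset.sum_empty, zero_add, pow_one] at h0
  calc |Real.log (1 - q ^ (k + 1) * q ^ j)|
      ≤ |q ^ (k + 1) * q ^ j| / (1 - |q ^ (k + 1) * q ^ j|) := h0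
    _ ≤ |q ^ (k + 1) * q ^ j| / (1 - |q|) := by
        apply div_le_div_of_nonneg_left (abs_nonneg _) hq1
        linarith
    _ = |q| ^ (k + 1) / (1 - |q|) * |q| ^ j := by
        rw [hxabs]; ring

private lemma hasProd_P {q : ℝ} (hq : |q| < 1) (k : ℕ) :
    HasProd (fun j : ℕ => 1 - q ^ (k + 1) * q ^ j)
      (Real.exp (∑' j : ℕ, Real.log (1 - q ^ (k + 1) * q ^ j))) := by
  have h := (summable_log' hq k).hasSum.rexp
  have heq : (Real.exp ∘ fun j : ℕ => Real.log (1 - q ^ (k + 1) * q ^ j))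
      = fun j : ℕ => 1 - q ^ (k + 1) * q ^ j :=
    funext fun j => Real.exp_log (fac_pos' hq k j)
  rwa [heq] at h

private lemma P_pos {q : ℝ} (hq : |q| < 1) (k : ℕ) :
    0 < ∏' j : ℕ, (1 - q ^ (k + 1) * q ^ j) := by
  rw [(hasProd_P hq k).tprod_eq]
  exact Real.exp_pos _

private lemma P_rec {q : ℝ} (hq : |q| < 1) (k : ℕ) :
    (∏' j : ℕ, (1 - q ^ (k + 1) * q ^ j))
      = (1 - q ^ (k + 1)) * ∏' j : ℕ, (1 - q ^ (k + 2) * q ^ j) := by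
  have hm1 : Multipliable fun n : ℕ => 1 - q ^ (k + 1) * q ^ (n + 1) := by
    have he : (fun n : ℕ => 1 - q ^ (k + 1) * q ^ (n + 1))
        = fun n : ℕ => 1 - q ^ (k + 1 + 1) * q ^ n := funext fun n => by ring
    rw [he]; exact ⟨_, hasProd_P hq (k + 1)⟩
  rw [tprod_eq_zero_mul' hm1]
  congr 1
  · simp
  · exact tprod_congr fun j => by ring

private lemma P_tendsto {q : ℝ} (hq : |q| < 1) :
    Tendsto (fun n : ℕ => ∏' j : ℕ, (1 - q ^ (n + 1) * q ^ j)) atTop (𝓝 1) := by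
  have hQP : ∀ n : ℕ, (∏' j : ℕ, (1 - q ^ (0 + 1) * q ^ j))
      = (∏ m ∈ Finset.range n, (1 - q ^ (m + 1)))
          * ∏' j : ℕ, (1 - q ^ (n + 1) * q ^ j) := by
    intro n
    induction n with
    | zero => simp
    | succ n ih =>
        rw [ih, Finset.prod_range_succ, mul_assoc]
        congr 1
        exact P_rec hq n
  have hQpos : ∀ n : ℕ, 0 < ∏ m ∈ Finset.range n, (1 - q ^ (m + 1)) :=
    fun n => Finset.prod_pos fun m _ => by simpa using fac_pos' hq m 0
  have hP0 : 0 < ∏' j : ℕ, (1 - q ^ (0 + 1) * q ^ j) := P_pos hq 0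
  have h0 : HasProd (fun m : ℕ => 1 - q ^ (m + 1))
      (∏' j : ℕ, (1 - q ^ (0 + 1) * q ^ j)) := by
    have hm : Multipliable fun j : ℕ => 1 - q ^ (0 + 1) * q ^ j := ⟨_, hasProd_P hq 0⟩
    have h := hm.hasProd
    have he : (fun j : ℕ => 1 - q ^ (0 + 1) * q ^ j)
        = fun m : ℕ => 1 - q ^ (m + 1) := funext fun j => by ring
    rw [show (∏' j : ℕ, (1 - q ^ (0 + 1) * q ^ j)) = ∏' m : ℕ, (1 - q ^ (m + 1)) from
      tprod_congr fun j => by ring]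
    rwa [he] at h
  have hQtend : Tendsto (fun n : ℕ => ∏ m ∈ Finset.range n, (1 - q ^ (m + 1))) atTop
      (𝓝 (∏' j : ℕ, (1 - q ^ (0 + 1) * q ^ j))) := h0.tendsto_prod_nat
  have hdiv : Tendsto (fun n : ℕ => (∏' j : ℕ, (1 - q ^ (0 + 1) * q ^ j))
      / ∏ m ∈ Finset.range n, (1 - q ^ (m + 1))) atTop
      (𝓝 ((∏' j : ℕ, (1 - q ^ (0 + 1) * q ^ j)) / (∏' j : ℕ, (1 - q ^ (0 + 1) * q ^ j)))) :=
    tendsto_const_nhds.div hQtend hP0.ne'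
  rw [div_self hP0.ne'] at hdiv
  refine hdiv.congr fun n => ?_
  rw [hQP n]
  exact mul_div_cancel_left₀ _ (hQpos n).ne'

/-- For `0 < |q| < 1`,
`∑_{k≥1} q^{2k}/(q^k;q)_∞ = 2/(q;q)_∞ − 1/(q(q;q)_∞) + 1/q − 1`. -/
theorem stmt_12 (q : ℝ) (hq : |q| < 1) (hq0 : q ≠ 0) :
    (∑' k : ℕ, q ^ (2 * (k + 1)) / ∏' j : ℕ, (1 - q ^ (k + 1) * q ^ j))
      = 2 / (∏' j : ℕ, (1 - q * q ^ j))
        - 1 / (q * ∏' j : ℕ, (1 - q * q ^ j)) + 1 / q - 1 := by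
  have hP0eq : (∏' j : ℕ, (1 - q * q ^ j)) = ∏' j : ℕ, (1 - q ^ (0 + 1) * q ^ j) := by
    exact tprod_congr fun j => by ring
  have hPpos := fun k => P_pos (q := q) hq k
  have hPne : ∀ k : ℕ, (∏' j : ℕ, (1 - q ^ (k + 1) * q ^ j)) ≠ 0 := fun k => (hPpos k).ne'
  -- single-term identity
  have keyid : ∀ n : ℕ, q ^ (2 * (n + 1)) / (∏' j : ℕ, (1 - q ^ (n + 1) * q ^ j))
      = (q ^ (n + 1) / (∏' j : ℕ, (1 - q ^ (n + 1) * q ^ j))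
          - q ^ (n + 2) / (∏' j : ℕ, (1 - q ^ (n + 2) * q ^ j))) / q
        - ((1 - q) / q) * (1 / (∏' j : ℕ, (1 - q ^ (n + 1) * q ^ j))
            - 1 / (∏' j : ℕ, (1 - q ^ (n + 2) * q ^ j))) := by
    intro n
    have hr : (∏' j : ℕ, (1 - q ^ (n + 1) * q ^ j))
        = (1 - q ^ (n + 1)) * ∏' j : ℕ, (1 - q ^ (n + 2) * q ^ j) := P_rec hq n
    have h1 : (1 : ℝ) - q ^ (n + 1) ≠ 0 := by
      have := fac_pos' hq n 0; simp only [pow_zero, mul_one] at this; linarith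
    have h2 := hPne (n + 1)
    rw [hr]
    field_simp
    ring
  -- partial sums
  have hsum : ∀ n : ℕ, ∑ k ∈ Finset.range n,
      q ^ (2 * (k + 1)) / (∏' j : ℕ, (1 - q ^ (k + 1) * q ^ j))
      = (q ^ (0 + 1) / (∏' j : ℕ, (1 - q ^ (0 + 1) * q ^ j))
          - q ^ (n + 1) / (∏' j : ℕ, (1 - q ^ (n + 1) * q ^ j))) / q
        - ((1 - q) / q) * (1 / (∏' j : ℕ, (1 - q ^ (0 + 1) * q ^ j))
            - 1 / (∏' j : ℕ, (1 - q ^ (n + 1) * q ^ j))) := by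
    intro n
    induction n with
    | zero => simp
    | succ n ih =>
        rw [Finset.sum_range_succ, ih, keyid n, show n + 1 + 1 = n + 2 from rfl]
        ring
  -- limits
  have hBtend : Tendsto (fun n : ℕ => 1 / (∏' j : ℕ, (1 - q ^ (n + 1) * q ^ j))) atTop
      (𝓝 1) := by
    have := (P_tendsto hq).inv₀ one_ne_zero
    simpa [one_div] using this
  have hCtend : Tendsto (fun n : ℕ => q ^ (n + 1) / (∏' j : ℕ, (1 - q ^ (n + 1) * q ^ j)))
      atTop (𝓝 0) := by
    have hpow : Tendsto (fun n : ℕ => q ^ (n + 1)) atTop (𝓝 0) :=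
      (tendsto_pow_atTop_nhds_zero_of_abs_lt_one hq).comp (tendsto_add_atTop_nat 1)
    have := hpow.mul hBtend
    simpa [div_eq_mul_inv, one_div, mul_comm] using
      (by simpa [zero_mul] using hpow.mul hBtend :
        Tendsto (fun n : ℕ => q ^ (n + 1) * (1 / (∏' j : ℕ, (1 - q ^ (n + 1) * q ^ j))))
          atTop (𝓝 0))
  set A : ℝ := ∏' j : ℕ, (1 - q ^ (0 + 1) * q ^ j) with hA
  have hAne : A ≠ 0 := hPne 0
  have htend : Tendsto (fun n : ℕ => ∑ k ∈ Finset.range n,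
      q ^ (2 * (k + 1)) / (∏' j : ℕ, (1 - q ^ (k + 1) * q ^ j))) atTop
      (𝓝 ((q ^ (0 + 1) / A - 0) / q - ((1 - q) / q) * (1 / A - 1))) := by
    apply Tendsto.congr (fun n => (hsum n).symm)
    exact (((tendsto_const_nhds.sub hCtend).div_const q).sub
      (((tendsto_const_nhds.sub hBtend)).const_mul ((1 - q) / q)))
  have hnonneg : ∀ k : ℕ, 0 ≤ q ^ (2 * (k + 1)) / (∏' j : ℕ, (1 - q ^ (k + 1) * q ^ j)) := by
    intro k
    apply div_nonneg _ (hPpos k).le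
    rw [pow_mul]
    positivity
  have hhs : HasSum (fun k : ℕ => q ^ (2 * (k + 1)) / (∏' j : ℕ, (1 - q ^ (k + 1) * q ^ j)))
      ((q ^ (0 + 1) / A - 0) / q - ((1 - q) / q) * (1 / A - 1)) :=
    (hasSum_iff_tendsto_nat_of_nonneg hnonneg _).mpr htend
  rw [hhs.tsum_eq, hP0eq]
  field_simp
  ring
end

section
/- For every positive integer n and every m ≥ 1, the coefficient of q^n in ∑_{k≥1} q^{mk}/(q^k;q)_∞ equals the number of partitions of n in which the smallest part occurs at least m times. -/
namespace Stmt13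

open Multiset Filter

/-- Weight of a multiset `s` viewed as a partition into parts `≥ M` via `x ↦ x + M`. -/
def W (M : ℕ) (s : Multiset ℕ) : ℕ := M * Multiset.card s + s.sum


/-- Weight of a multiset `s` viewed as a partition into parts `≥ M` via `x ↦ x + M`. -/
lemma abs_log_one_sub_le {x : ℝ} (hx : |x| < 1) :
    |Real.log (1 - x)| ≤ |x| / (1 - |x|) := by
  have h1 : 0 < 1 - |x| := by linarith
  have hx1 : x < 1 := lt_of_le_of_lt (le_abs_self x) hx
  have hx2 : -1 < x := by have := neg_abs_le x; linarith
  have h2 : 0 < 1 - x := by linarith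
  have hub : Real.log (1 - x) ≤ |x| / (1 - |x|) := by
    have h3 := Real.log_le_sub_one_of_pos h2
    have h4 : -x ≤ |x| := neg_le_abs x
    have h5 : Real.log (1 - x) ≤ |x| := by linarith
    refine h5.trans ?_
    rw [le_div_iff₀ h1]
    nlinarith [abs_nonneg x]
  have hlb : -(|x| / (1 - |x|)) ≤ Real.log (1 - x) := by
    have h3 : 0 < (1 - x)⁻¹ := inv_pos.2 h2
    have h4 := Real.log_le_sub_one_of_pos h3
    rw [Real.log_inv] at h4
    -- h4 : -log (1-x) ≤ (1-x)⁻¹ - 1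
    have h5 : (1 - x)⁻¹ - 1 = x / (1 - x) := by field_simp; ring
    have h6 : x / (1 - x) ≤ |x| / (1 - |x|) := by
      rcases le_or_gt 0 x with h | h
      · rw [abs_of_nonneg h]
      · have hneg : x / (1 - x) ≤ 0 := le_of_lt (div_neg_of_neg_of_pos h h2)
        have : 0 ≤ |x| / (1 - |x|) := div_nonneg (abs_nonneg x) h1.le
        linarith
    linarith
  exact abs_le.2 ⟨hlb, hub⟩




/-- summability of `j ↦ log (1 - q^(a+1+j))` -/
lemma summable_log {q : ℝ} (hq : |q| < 1) (a : ℕ) :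
    Summable (fun j : ℕ => Real.log (1 - q ^ (a + 1 + j))) := by
  have h0 : (0:ℝ) ≤ |q| := abs_nonneg q
  have h1r : (0:ℝ) < 1 - |q| := by linarith
  refine Summable.of_norm_bounded (g := fun j : ℕ => (|q| / (1 - |q|)) * |q| ^ j)
    ((summable_geometric_of_lt_one h0 hq).mul_left _) (fun j => ?_)
  have habs : |q ^ (a + 1 + j)| = |q| ^ (a + 1 + j) := abs_pow q _
  have hle : |q| ^ (a + 1 + j) ≤ |q| ^ (1 + j) :=
    pow_le_pow_of_le_one h0 hq.le (by omega)
  have hlt : |q ^ (a + 1 + j)| < 1 := by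
    rw [habs]
    calc |q| ^ (a+1+j) ≤ |q| ^ (1+j) := hle
      _ ≤ |q| ^ 1 := pow_le_pow_of_le_one h0 hq.le (by omega)
      _ < 1 := by simpa using hq
  calc ‖Real.log (1 - q ^ (a + 1 + j))‖
      ≤ |q ^ (a+1+j)| / (1 - |q ^ (a+1+j)|) := abs_log_one_sub_le hlt
    _ ≤ (|q| ^ (1 + j)) / (1 - |q|) := by
        apply div_le_div₀ (pow_nonneg h0 _) (by rw [habs]; exact hle) h1r
        rw [habs]
        have : |q| ^ (a+1+j) ≤ |q| := by
          calc |q| ^ (a+1+j) ≤ |q| ^ 1 := pow_le_pow_of_le_one h0 hq.le (by omega)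
            _ = |q| := pow_one _
        linarith
    _ = (|q| / (1 - |q|)) * |q| ^ j := by rw [pow_add, pow_one]; ring

/-- each factor is positive -/
lemma fact_pos {q : ℝ} (hq : |q| < 1) {n : ℕ} (hn : 1 ≤ n) : 0 < 1 - q ^ n := by
  have h0 : (0:ℝ) ≤ |q| := abs_nonneg q
  have : |q ^ n| < 1 := by
    rw [abs_pow]
    calc |q| ^ n ≤ |q| ^ 1 := pow_le_pow_of_le_one h0 hq.le hn
      _ < 1 := by simpa using hq
  have := (abs_lt.1 this).2
  linarith

lemma pow_count_prod (r : ℝ) (K : ℕ) (s : Multiset ℕ) (hs : ∀ x ∈ s, x < K) :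
    r ^ W 1 s = ∏ i : Fin K, (r ^ ((i : ℕ) + 1)) ^ (s.count (i : ℕ)) := by
  induction s using Multiset.induction_on with
  | empty => simp [W]
  | cons a t ih =>
      have ha : a < K := hs a (mem_cons_self a t)
      have ht : ∀ x ∈ t, x < K := fun x hx => hs x (mem_cons_of_mem hx)
      have hW : W 1 (a ::ₘ t) = W 1 t + (a + 1) := by
        simp only [W, Multiset.sum_cons, Multiset.card_cons]; ring
      rw [hW, pow_add, ih ht]
      have hcount : ∀ i : Fin K,
          (r ^ ((i : ℕ) + 1)) ^ ((a ::ₘ t).count (i : ℕ))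
            = (r ^ ((i : ℕ) + 1)) ^ (t.count (i : ℕ))
              * (if i = (⟨a, ha⟩ : Fin K) then r ^ ((i : ℕ) + 1) else 1) := by
        intro i
        rw [Multiset.count_cons]
        by_cases h : (i : ℕ) = a
        · have : i = (⟨a, ha⟩ : Fin K) := Fin.ext h
          simp [this, pow_add]
        · have : i ≠ (⟨a, ha⟩ : Fin K) := by
            intro hh; exact h (by rw [hh])
          simp [h, this]
      rw [Finset.prod_congr rfl (fun i _ => hcount i), Finset.prod_mul_distrib]
      congr 1
      rw [Finset.prod_ite_eq' Finset.univ (⟨a, ha⟩ : Fin K)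
        (fun i => r ^ ((i : ℕ) + 1))]
      simp




lemma summable_W1 {r : ℝ} (h0 : 0 ≤ r) (h1 : r < 1) :
    Summable (fun s : Multiset ℕ => r ^ W 1 s) := by
  have hrabs : |r| < 1 := by rwa [abs_of_nonneg h0]
  have hlog : Summable (fun i : ℕ => -Real.log (1 - r ^ (0 + 1 + i))) :=
    (summable_log hrabs 0).neg
  have hlognn : ∀ i : ℕ, 0 ≤ -Real.log (1 - r ^ (0 + 1 + i)) := by
    intro i
    have hpow1 : r ^ (0 + 1 + i) < 1 := pow_lt_one₀ h0 h1 (by omega)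
    have hpow0 : 0 ≤ r ^ (0 + 1 + i) := pow_nonneg h0 _
    have : Real.log (1 - r ^ (0+1+i)) ≤ 0 := Real.log_nonpos (by linarith) (by linarith)
    linarith
  set C := Real.exp (∑' i : ℕ, -Real.log (1 - r ^ (0 + 1 + i))) with hC
  apply summable_of_sum_le (c := C) (fun s => pow_nonneg h0 _)
  intro u
  classical
  set K : ℕ := 1 + u.sup (fun s => s.sum) with hK
  set T : ℕ := 1 + u.sup (fun s => Multiset.card s) with hT
  have hmemK : ∀ s ∈ u, ∀ x ∈ s, x < K := by
    intro s hs x hx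
    have h1' : x ≤ s.sum := Multiset.le_sum_of_mem hx
    have h2' : s.sum ≤ u.sup (fun s => s.sum) := Finset.le_sup hs
    omega
  have hmemT : ∀ s ∈ u, ∀ i : ℕ, s.count i < T := by
    intro s hs i
    have h1' : s.count i ≤ Multiset.card s := Multiset.count_le_card _ _
    have h2' : Multiset.card s ≤ u.sup (fun s => Multiset.card s) := Finset.le_sup hs
    omega
  set Φ : Multiset ℕ → (Fin K → ℕ) := fun s i => s.count (i : ℕ) with hΦ
  have hinj : ∀ s ∈ u, ∀ t ∈ u, Φ s = Φ t → s = t := by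
    intro s hs t ht h
    ext a
    by_cases ha : a < K
    · exact congrFun h ⟨a, ha⟩
    · rw [Multiset.count_eq_zero_of_notMem, Multiset.count_eq_zero_of_notMem]
      · intro hmem; exact ha (hmemK t ht a hmem)
      · intro hmem; exact ha (hmemK s hs a hmem)
  have step1 : ∑ s ∈ u, r ^ W 1 s
      = ∑ g ∈ u.image Φ, ∏ i : Fin K, (r ^ ((i : ℕ) + 1)) ^ (g i) := by
    rw [Finset.sum_image hinj]
    exact Finset.sum_congr rfl fun s hs => pow_count_prod r K s (hmemK s hs)
  have hsub : u.image Φ ⊆ Fintype.piFinset (fun _ : Fin K => Finset.range T) := by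
    intro g hg
    rw [Finset.mem_image] at hg
    obtain ⟨s, hs, rfl⟩ := hg
    rw [Fintype.mem_piFinset]
    intro i
    rw [Finset.mem_range]
    exact hmemT s hs _
  have step2 : ∑ g ∈ u.image Φ, ∏ i : Fin K, (r ^ ((i : ℕ) + 1)) ^ (g i)
      ≤ ∑ g ∈ Fintype.piFinset (fun _ : Fin K => Finset.range T),
          ∏ i : Fin K, (r ^ ((i : ℕ) + 1)) ^ (g i) := by
    apply Finset.sum_le_sum_of_subset_of_nonneg hsub
    intro g _ _
    exact Finset.prod_nonneg fun i _ => pow_nonneg (pow_nonneg h0 _) _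
  have step3 : ∑ g ∈ Fintype.piFinset (fun _ : Fin K => Finset.range T),
        ∏ i : Fin K, (r ^ ((i : ℕ) + 1)) ^ (g i)
      = ∏ i : Fin K, ∑ t ∈ Finset.range T, (r ^ ((i : ℕ) + 1)) ^ t :=
    (Finset.prod_univ_sum _ _).symm
  have hfac : ∀ i : Fin K, 0 ≤ r ^ ((i : ℕ) + 1) ∧ r ^ ((i : ℕ) + 1) < 1 :=
    fun i => ⟨pow_nonneg h0 _, pow_lt_one₀ h0 h1 (by omega)⟩
  have step4 : ∏ i : Fin K, ∑ t ∈ Finset.range T, (r ^ ((i : ℕ) + 1)) ^ t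
      ≤ ∏ i : Fin K, (1 - r ^ ((i : ℕ) + 1))⁻¹ := by
    apply Finset.prod_le_prod
    · intro i _
      exact Finset.sum_nonneg fun t _ => pow_nonneg (hfac i).1 _
    · intro i _
      have hsummable := summable_geometric_of_lt_one (hfac i).1 (hfac i).2
      calc ∑ t ∈ Finset.range T, (r ^ ((i : ℕ) + 1)) ^ t
          ≤ ∑' t : ℕ, (r ^ ((i : ℕ) + 1)) ^ t :=
            Summable.sum_le_tsum _ (fun t _ => pow_nonneg (hfac i).1 _) hsummable
        _ = (1 - r ^ ((i : ℕ) + 1))⁻¹ := tsum_geometric_of_lt_one (hfac i).1 (hfac i).2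
  have step5 : ∏ i : Fin K, (1 - r ^ ((i : ℕ) + 1))⁻¹
      = Real.exp (∑ i : Fin K, -Real.log (1 - r ^ ((i : ℕ) + 1))) := by
    rw [Real.exp_sum]
    apply Finset.prod_congr rfl
    intro i _
    have hpos : 0 < 1 - r ^ ((i : ℕ) + 1) := by
      have := (hfac i).2; have := (hfac i).1; linarith
    rw [Real.exp_neg, Real.exp_log hpos]
  have step6 : ∑ i : Fin K, -Real.log (1 - r ^ ((i : ℕ) + 1))
      ≤ ∑' i : ℕ, -Real.log (1 - r ^ (0 + 1 + i)) := by
    have : ∑ i : Fin K, -Real.log (1 - r ^ ((i : ℕ) + 1))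
        = ∑ i ∈ Finset.range K, -Real.log (1 - r ^ (0 + 1 + i)) := by
      rw [Fin.sum_univ_eq_sum_range (fun i => -Real.log (1 - r ^ (i + 1))) K]
      exact Finset.sum_congr rfl fun i _ => by norm_num [add_comm]
    rw [this]
    exact Summable.sum_le_tsum _ (fun i _ => hlognn i) hlog
  calc ∑ s ∈ u, r ^ W 1 s
      ≤ ∏ i : Fin K, (1 - r ^ ((i : ℕ) + 1))⁻¹ := by
        rw [step1]; exact le_trans step2 (le_of_eq (step3.trans rfl) |>.trans step4)
    _ = Real.exp (∑ i : Fin K, -Real.log (1 - r ^ ((i : ℕ) + 1))) := step5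
    _ ≤ C := Real.exp_le_exp.2 step6

lemma summable_W {r : ℝ} (h0 : 0 ≤ r) (h1 : r < 1) {M : ℕ} (hM : 1 ≤ M) :
    Summable (fun s : Multiset ℕ => r ^ W M s) := by
  apply Summable.of_nonneg_of_le (fun s => pow_nonneg h0 _)
    (fun s => ?_) (summable_W1 h0 h1)
  apply pow_le_pow_of_le_one h0 h1.le
  have : 1 * Multiset.card s ≤ M * Multiset.card s := Nat.mul_le_mul_right _ hM
  simp only [W]; omega




def splitEquiv : ℕ × Multiset ℕ ≃ Multiset ℕ where
  toFun p := replicate p.1 0 + p.2.map (· + 1)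
  invFun s := (s.count 0, (s.filter (· ≠ 0)).map (· - 1))
  left_inv p := by
    obtain ⟨t, u⟩ := p
    have h1 : (replicate t 0 + u.map (· + 1)).count 0 = t := by
      rw [Multiset.count_add, Multiset.count_replicate_self]
      have : (0 : ℕ) ∉ u.map (· + 1) := by
        simp [Multiset.mem_map]
      rw [Multiset.count_eq_zero_of_notMem this]; omega

    have h2 : ((replicate t 0 + u.map (· + 1)).filter (· ≠ 0)).map (· - 1) = u := by
      rw [Multiset.filter_add]
      have hr : (replicate t 0 : Multiset ℕ).filter (· ≠ 0) = 0 := by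
        apply Multiset.filter_eq_nil.2
        intro a ha
        rw [Multiset.eq_of_mem_replicate ha]
        simp
      have hm : (u.map (· + 1)).filter (· ≠ 0) = u.map (· + 1) := by
        apply Multiset.filter_eq_self.2
        intro a ha
        rw [Multiset.mem_map] at ha
        obtain ⟨b, _, rfl⟩ := ha
        simp
      rw [hr, hm, zero_add, Multiset.map_map]
      calc Multiset.map ((· - 1) ∘ (· + 1)) u = Multiset.map id u := by
            apply Multiset.map_congr rfl; intro x _; simp
        _ = u := Multiset.map_id _
    simp only [Prod.mk.injEq]
    exact ⟨h1, h2⟩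
  right_inv s := by
    have h2 : ((s.filter (· ≠ 0)).map (· - 1)).map (· + 1) = s.filter (· ≠ 0) := by
      rw [Multiset.map_map]
      rw [show ((· + 1) ∘ (· - 1) : ℕ → ℕ) = fun x => x - 1 + 1 from rfl]
      calc Multiset.map (fun x => x - 1 + 1) (s.filter (· ≠ 0))
          = Multiset.map id (s.filter (· ≠ 0)) := by
            apply Multiset.map_congr rfl
            intro x hx
            have := Multiset.of_mem_filter hx
            simp at this ⊢
            omega
        _ = s.filter (· ≠ 0) := Multiset.map_id _
    simp only
    rw [h2]
    have h3 : replicate (s.count 0) 0 = s.filter (· = 0) := (Multiset.filter_eq' s 0).symm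
    rw [h3]
    have := Multiset.filter_add_not (· = 0) s
    convert this using 2
  
lemma W_splitEquiv (M : ℕ) (p : ℕ × Multiset ℕ) :
    W M (splitEquiv p) = M * p.1 + W (M + 1) p.2 := by
  obtain ⟨t, u⟩ := p
  simp only [splitEquiv, Equiv.coe_fn_mk, W]
  rw [Multiset.card_add, Multiset.card_replicate, Multiset.card_map,
    Multiset.sum_add, Multiset.sum_replicate]
  have hsum : (u.map (· + 1)).sum = u.sum + Multiset.card u := by
    induction u using Multiset.induction_on with
    | empty => simp
    | cons a v ih => simp [ih]; ring
  rw [hsum]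
  simp only [smul_zero]
  ring




def P (m k : ℕ) (s : Multiset ℕ) : Multiset ℕ :=
  replicate m (k + 1) + s.map (· + (k + 1))

lemma P_sum (m k : ℕ) (s : Multiset ℕ) :
    (P m k s).sum = m * (k + 1) + W (k + 1) s := by
  simp only [P, W, Multiset.sum_add, Multiset.sum_replicate, smul_eq_mul]
  have hsum : (s.map (· + (k+1))).sum = s.sum + Multiset.card s * (k+1) := by
    induction s using Multiset.induction_on with
    | empty => simp
    | cons a v ih => simp [ih]; ring
  rw [hsum]; ring

lemma P_min (m k : ℕ) (s : Multiset ℕ) : ∀ t ∈ P m k s, k + 1 ≤ t := by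
  intro t ht
  rw [P, Multiset.mem_add] at ht
  rcases ht with h | h
  · rw [Multiset.eq_of_mem_replicate h]
  · rw [Multiset.mem_map] at h
    obtain ⟨b, _, rfl⟩ := h
    omega

lemma P_mem {m : ℕ} (hm : 1 ≤ m) (k : ℕ) (s : Multiset ℕ) : (k + 1) ∈ P m k s := by
  rw [P, Multiset.mem_add]
  left
  rw [Multiset.mem_replicate]
  exact ⟨by omega, rfl⟩

lemma P_count {m : ℕ} (k : ℕ) (s : Multiset ℕ) : m ≤ (P m k s).count (k + 1) := by
  rw [P, Multiset.count_add, Multiset.count_replicate_self]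
  omega

/-- the sigma type of "good" partitions -/
abbrev GoodT (m : ℕ) := Σ n : ℕ, {π : (n + 1).Partition //
  ∃ s ∈ π.parts, (∀ t ∈ π.parts, s ≤ t) ∧ m ≤ π.parts.count s}

lemma GoodT_ext {m : ℕ} (x y : GoodT m) (h1 : x.1 = y.1)
    (h2 : x.2.1.parts = y.2.1.parts) : x = y := by
  obtain ⟨a, p, hp⟩ := x
  obtain ⟨b, p', hp'⟩ := y
  dsimp at h1
  subst h1
  dsimp at h2
  congr 1
  exact Subtype.ext (Nat.Partition.ext h2)

lemma msum_pos {m : ℕ} (hm : 1 ≤ m) (k : ℕ) (s : Multiset ℕ) :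
    1 ≤ m * (k + 1) + W (k + 1) s := by
  have : 1 * 1 ≤ m * (k+1) := Nat.mul_le_mul hm (by omega)
  omega

def F {m : ℕ} (hm : 1 ≤ m) : ℕ × Multiset ℕ → GoodT m := fun p =>
  ⟨m * (p.1 + 1) + W (p.1 + 1) p.2 - 1,
   ⟨⟨P m p.1 p.2,
     fun {t} ht => lt_of_lt_of_le (Nat.succ_pos p.1) (P_min m p.1 p.2 t ht),
     by rw [P_sum]; have := msum_pos hm p.1 p.2; omega⟩,
    ⟨p.1 + 1, P_mem hm p.1 p.2, P_min m p.1 p.2, P_count p.1 p.2⟩⟩⟩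

lemma F_fst {m : ℕ} (hm : 1 ≤ m) (p : ℕ × Multiset ℕ) :
    (F hm p).1 + 1 = m * (p.1 + 1) + W (p.1 + 1) p.2 := by
  have := msum_pos hm p.1 p.2
  simp only [F]
  omega

lemma F_bijective {m : ℕ} (hm : 1 ≤ m) : Function.Bijective (F hm) := by
  constructor
  · intro p p' h
    have hparts : P m p.1 p.2 = P m p'.1 p'.2 :=
      congrArg (fun x : GoodT m => x.2.1.parts) h
    have hk : p.1 = p'.1 := by
      have h1 : p.1 + 1 ≤ p'.1 + 1 := by
        apply P_min m p.1 p.2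
        rw [hparts]
        exact P_mem hm p'.1 p'.2
      have h2 : p'.1 + 1 ≤ p.1 + 1 := by
        apply P_min m p'.1 p'.2
        rw [← hparts]
        exact P_mem hm p.1 p.2
      omega
    have hs : p.2 = p'.2 := by
      rw [P, P, hk] at hparts
      have hmap := add_left_cancel hparts
      exact Multiset.map_injective (fun a b hab => by omega) hmap
    exact Prod.ext hk hs
  · rintro ⟨n, π, hgood⟩
    obtain ⟨σ, hσmem, hmin, hcount⟩ := hgood
    have hσpos : 0 < σ := π.parts_pos hσmem
    obtain ⟨k, rfl⟩ : ∃ k, σ = k + 1 := ⟨σ - 1, by omega⟩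
    have hrep : replicate m (k+1) ≤ π.parts :=
      Multiset.le_count_iff_replicate_le.mp hcount
    set d : Multiset ℕ := π.parts - replicate m (k+1) with hd
    have hdparts : replicate m (k+1) + d = π.parts := by
      rw [add_comm]
      exact tsub_add_cancel_of_le hrep
    have hdge : ∀ x ∈ d, k + 1 ≤ x := by
      intro x hx
      have : x ∈ π.parts := Multiset.mem_of_le (Multiset.sub_le_self _ _) hx
      exact hmin x this
    refine ⟨(k, d.map (· - (k+1))), ?_⟩
    have hPd : P m k (d.map (· - (k+1))) = π.parts := by
      rw [P, Multiset.map_map]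
      have : Multiset.map ((· + (k+1)) ∘ (· - (k+1))) d = d := by
        calc Multiset.map ((· + (k+1)) ∘ (· - (k+1))) d = Multiset.map id d := by
              apply Multiset.map_congr rfl
              intro x hx
              have := hdge x hx
              simp only [Function.comp_apply, id_eq]
              omega
          _ = d := Multiset.map_id _
      rw [this, hdparts]
    apply GoodT_ext
    · have hsum : m * (k + 1) + W (k + 1) (d.map (· - (k+1))) = n + 1 := by
        rw [← P_sum, hPd, π.parts_sum]
      simp only [F]
      omega
    · exact hPd




noncomputable def G (q : ℝ) (M : ℕ) : ℝ := ∑' s : Multiset ℕ, q ^ W M s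

lemma norm_q_pow_W (q : ℝ) (M : ℕ) :
    (fun s : Multiset ℕ => ‖q ^ W M s‖) = fun s => |q| ^ W M s := by
  funext s; rw [Real.norm_eq_abs, abs_pow]

lemma summable_q {q : ℝ} (hq : |q| < 1) {M : ℕ} (hM : 1 ≤ M) :
    Summable (fun s : Multiset ℕ => q ^ W M s) := by
  apply Summable.of_norm
  rw [norm_q_pow_W]
  exact summable_W (abs_nonneg q) hq hM

lemma G_rec {q : ℝ} (hq : |q| < 1) {M : ℕ} (hM : 1 ≤ M) :
    G q (M + 1) = (1 - q ^ M) * G q M := by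
  have hsum1 : Summable (fun s : Multiset ℕ => q ^ W M s) := summable_q hq hM
  have hsplit : Summable (fun p : ℕ × Multiset ℕ => q ^ (M * p.1) * q ^ W (M+1) p.2) := by
    have h := splitEquiv.summable_iff.mpr hsum1
    have he : ((fun s : Multiset ℕ => q ^ W M s) ∘ splitEquiv)
        = fun p : ℕ × Multiset ℕ => q ^ (M * p.1) * q ^ W (M+1) p.2 := by
      funext p
      simp only [Function.comp_apply]
      rw [W_splitEquiv M p, pow_add]
    rwa [he] at h
  have h1 : G q M = ∑' p : ℕ × Multiset ℕ, q ^ (M * p.1) * q ^ W (M+1) p.2 := by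
    rw [G, ← Equiv.tsum_eq splitEquiv (fun s => q ^ W M s)]
    apply tsum_congr
    intro p
    rw [W_splitEquiv M p, pow_add]
  have h2 : ∑' p : ℕ × Multiset ℕ, q ^ (M * p.1) * q ^ W (M+1) p.2
      = ∑' k : ℕ, ∑' s : Multiset ℕ, q ^ (M * k) * q ^ W (M+1) s :=
    Summable.tsum_prod' hsplit hsplit.prod_factor
  have h3 : ∀ k : ℕ, ∑' s : Multiset ℕ, q ^ (M * k) * q ^ W (M+1) s
      = q ^ (M * k) * G q (M+1) := fun k => tsum_mul_left
  have hnorm : ‖q ^ M‖ < 1 := by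
    rw [Real.norm_eq_abs, abs_pow]
    calc |q| ^ M ≤ |q| ^ 1 := pow_le_pow_of_le_one (abs_nonneg q) hq.le hM
      _ < 1 := by simpa using hq
  have h4 : ∑' k : ℕ, q ^ (M * k) * G q (M+1) = (1 - q ^ M)⁻¹ * G q (M+1) := by
    rw [tsum_mul_right]
    congr 1
    rw [show (fun k : ℕ => q ^ (M * k)) = fun k => (q ^ M) ^ k from
      funext fun k => by rw [← pow_mul]]
    exact tsum_geometric_of_norm_lt_one hnorm
  have hGM : G q M = (1 - q ^ M)⁻¹ * G q (M+1) := by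
    rw [h1, h2]
    rw [tsum_congr h3, h4]
  have hne : (1 - q ^ M) ≠ 0 := ne_of_gt (fact_pos hq hM)
  rw [hGM, ← mul_assoc, mul_inv_cancel₀ hne, one_mul]

lemma G_sub_one {q : ℝ} (hq : |q| < 1) {M : ℕ} (hM : 1 ≤ M) :
    |G q M - 1| ≤ |q| ^ (M - 1) * ∑' s : Multiset ℕ, |q| ^ W 1 s := by
  have h0 : (0:ℝ) ≤ |q| := abs_nonneg q
  have hsum1 : Summable (fun s : Multiset ℕ => q ^ W M s) := summable_q hq hM
  classical
  have hsplit := Summable.tsum_eq_add_tsum_ite hsum1 (0 : Multiset ℕ)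
  have hW0 : W M (0 : Multiset ℕ) = 0 := by simp [W]
  rw [hW0, pow_zero] at hsplit
  have hGm1 : G q M - 1 = ∑' s : Multiset ℕ, if s = 0 then 0 else q ^ W M s := by
    rw [G, hsplit]; ring
  rw [hGm1]
  have hterm : ∀ s : Multiset ℕ,
      ‖if s = 0 then (0:ℝ) else q ^ W M s‖ ≤ |q| ^ (M - 1) * |q| ^ W 1 s := by
    intro s
    by_cases h : s = 0
    · simp [h]
      positivity
    · rw [if_neg h, Real.norm_eq_abs, abs_pow, ← pow_add]
      apply pow_le_pow_of_le_one h0 hq.le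
      have hc : 1 ≤ Multiset.card s := Multiset.card_pos.2 h
      have hmul : (M - 1) * 1 ≤ (M - 1) * Multiset.card s :=
        Nat.mul_le_mul_left _ hc
      have hsplit2 : (M - 1) * Multiset.card s + Multiset.card s = M * Multiset.card s := by
        have : M - 1 + 1 = M := by omega
        calc (M - 1) * Multiset.card s + Multiset.card s
            = ((M - 1) + 1) * Multiset.card s := by ring
          _ = M * Multiset.card s := by rw [this]
      simp only [W]
      omega
  have hbsum : Summable (fun s : Multiset ℕ => |q| ^ (M - 1) * |q| ^ W 1 s) :=
    (summable_W h0 hq le_rfl).mul_left _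
  calc |∑' s : Multiset ℕ, if s = 0 then (0:ℝ) else q ^ W M s|
      ≤ ∑' s : Multiset ℕ, ‖if s = 0 then (0:ℝ) else q ^ W M s‖ := by
        rw [← Real.norm_eq_abs]
        apply norm_tsum_le_tsum_norm
        apply Summable.of_nonneg_of_le (fun s => norm_nonneg _) hterm hbsum
    _ ≤ ∑' s : Multiset ℕ, |q| ^ (M - 1) * |q| ^ W 1 s := by
        apply Summable.tsum_le_tsum hterm _ hbsum
        apply Summable.of_nonneg_of_le (fun s => norm_nonneg _) hterm hbsum
    _ = |q| ^ (M - 1) * ∑' s : Multiset ℕ, |q| ^ W 1 s := tsum_mul_left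

lemma G_tendsto {q : ℝ} (hq : |q| < 1) (k : ℕ) :
    Tendsto (fun J : ℕ => G q (k + 1 + J)) atTop (nhds 1) := by
  have h0 : (0:ℝ) ≤ |q| := abs_nonneg q
  set C := ∑' s : Multiset ℕ, |q| ^ W 1 s with hC
  have hbound : ∀ J : ℕ, ‖G q (k + 1 + J) - 1‖ ≤ |q| ^ (k + J) * C := by
    intro J
    have := G_sub_one hq (M := k + 1 + J) (by omega)
    rw [Real.norm_eq_abs]
    have heq : k + 1 + J - 1 = k + J := by omega
    rwa [heq] at this
  have htend : Tendsto (fun J : ℕ => |q| ^ (k + J) * C) atTop (nhds 0) := by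
    have h1 : Tendsto (fun J : ℕ => |q| ^ J) atTop (nhds 0) :=
      tendsto_pow_atTop_nhds_zero_of_lt_one h0 hq
    have h2 : Tendsto (fun J : ℕ => |q| ^ k * |q| ^ J * C) atTop
        (nhds (|q| ^ k * 0 * C)) := (h1.const_mul _).mul_const _
    simp only [mul_zero, zero_mul] at h2
    convert h2 using 2 with J
    rw [pow_add]
  have := squeeze_zero_norm hbound htend
  have h3 : Tendsto (fun J : ℕ => G q (k + 1 + J) - 1 + 1) atTop (nhds (0 + 1)) :=
    this.add_const 1
  simpa using h3

lemma tprod_mul_G {q : ℝ} (hq : |q| < 1) (k : ℕ) :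
    (0 < ∏' j : ℕ, (1 - q ^ (k + 1 + j))) ∧
      (∏' j : ℕ, (1 - q ^ (k + 1 + j))) * G q (k + 1) = 1 := by
  have hpos : ∀ j : ℕ, 0 < 1 - q ^ (k + 1 + j) := fun j => fact_pos hq (by omega)
  have hlog : Summable (fun j : ℕ => Real.log (1 - q ^ (k + 1 + j))) := summable_log hq k
  -- HasProd via exp/log
  have hHP : HasProd (fun j : ℕ => 1 - q ^ (k + 1 + j))
      (∏' j : ℕ, (1 - q ^ (k + 1 + j))) := by
    have := Real.hasProd_of_hasSum_log
      (f := fun j => 1 - q ^ (k + 1 + j))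
      (fun j => hpos j) hlog.hasSum
    exact this.multipliable.hasProd
  have htprod_exp : (∏' j : ℕ, (1 - q ^ (k + 1 + j)))
      = Real.exp (∑' j : ℕ, Real.log (1 - q ^ (k + 1 + j))) := by
    have := Real.rexp_tsum_eq_tprod
      (f := fun j => 1 - q ^ (k + 1 + j))
      (fun j => hpos j) hlog
    exact this.symm
  have htpos : 0 < ∏' j : ℕ, (1 - q ^ (k + 1 + j)) := by
    rw [htprod_exp]; exact Real.exp_pos _
  refine ⟨htpos, ?_⟩
  -- partial products identity
  have hind : ∀ J : ℕ,
      (∏ j ∈ Finset.range J, (1 - q ^ (k + 1 + j))) * G q (k + 1) = G q (k + 1 + J) := by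
    intro J
    induction J with
    | zero => simp
    | succ J ih =>
        rw [Finset.prod_range_succ]
        have hrec := G_rec hq (M := k + 1 + J) (by omega)
        calc (∏ j ∈ Finset.range J, (1 - q ^ (k + 1 + j))) * (1 - q ^ (k + 1 + J))
              * G q (k + 1)
            = (1 - q ^ (k + 1 + J)) *
                ((∏ j ∈ Finset.range J, (1 - q ^ (k + 1 + j))) * G q (k + 1)) := by ring
          _ = (1 - q ^ (k + 1 + J)) * G q (k + 1 + J) := by rw [ih]
          _ = G q (k + 1 + J + 1) := (G_rec hq (by omega)).symm
          _ = G q (k + 1 + (J + 1)) := by ring_nf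
  have ht1 : Tendsto (fun J : ℕ => (∏ j ∈ Finset.range J, (1 - q ^ (k + 1 + j)))
      * G q (k + 1)) atTop (nhds ((∏' j : ℕ, (1 - q ^ (k + 1 + j))) * G q (k + 1))) :=
    (hHP.tendsto_prod_nat).mul_const _
  have ht2 : Tendsto (fun J : ℕ => (∏ j ∈ Finset.range J, (1 - q ^ (k + 1 + j)))
      * G q (k + 1)) atTop (nhds 1) := by
    rw [show (fun J : ℕ => (∏ j ∈ Finset.range J, (1 - q ^ (k + 1 + j))) * G q (k + 1))
      = fun J : ℕ => G q (k + 1 + J) from funext hind]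
    exact G_tendsto hq k
  exact tendsto_nhds_unique ht1 ht2


end Stmt13

open Stmt13 in
/-- For `m ≥ 1` and `|q| < 1`, the series `∑_{k≥1} q^{mk}/(q^k;q)_∞` is the generating
function for the number of partitions of `n` whose smallest part occurs at least `m`
times; i.e. the coefficient of `q^n` is that count. -/
theorem stmt_13 (m : ℕ) (hm : 1 ≤ m) (q : ℝ) (hq : |q| < 1) :
    (∑' k : ℕ, q ^ (m * (k + 1)) / ∏' j : ℕ, (1 - q ^ (k + 1) * q ^ j))
      = ∑' n : ℕ, (Nat.card {π : (n + 1).Partition //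
          ∃ s ∈ π.parts, (∀ t ∈ π.parts, s ≤ t) ∧ m ≤ π.parts.count s} : ℝ) * q ^ (n + 1) := by
  have h0 : (0:ℝ) ≤ |q| := abs_nonneg q
  set w : ℕ × Multiset ℕ → ℕ := fun p => m * (p.1 + 1) + W (p.1 + 1) p.2 with hwdef
  -- Step 1: each term of the LHS
  have hterm : ∀ k : ℕ, q ^ (m * (k + 1)) / (∏' j : ℕ, (1 - q ^ (k + 1) * q ^ j))
      = ∑' s : Multiset ℕ, q ^ (m * (k + 1) + W (k + 1) s) := by
    intro k
    have hfe : (fun j : ℕ => 1 - q ^ (k + 1) * q ^ j)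
        = fun j : ℕ => 1 - q ^ (k + 1 + j) := funext fun j => by rw [← pow_add q (k+1) j]
    have htp : (∏' j : ℕ, (1 - q ^ (k + 1) * q ^ j))
        = ∏' j : ℕ, (1 - q ^ (k + 1 + j)) := by rw [hfe]
    obtain ⟨htpos, hmul⟩ := tprod_mul_G hq k
    have hinv : (∏' j : ℕ, (1 - q ^ (k + 1 + j)))⁻¹ = G q (k + 1) :=
      inv_eq_of_mul_eq_one_right hmul
    rw [htp, div_eq_mul_inv, hinv, G, ← tsum_mul_left]
    exact tsum_congr fun s => by rw [← pow_add]
  -- Step 2: summability of the double family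
  have habs : Summable (fun p : ℕ × Multiset ℕ => |q| ^ w p) := by
    rw [summable_prod_of_nonneg (fun p => pow_nonneg h0 _)]
    have hinner : ∀ k : ℕ, Summable (fun s : Multiset ℕ => |q| ^ w (k, s)) := by
      intro k
      have h := (summable_W h0 hq (M := k + 1) (by omega)).mul_left (|q| ^ (m * (k + 1)))
      have he : (fun s : Multiset ℕ => |q| ^ (m * (k + 1)) * |q| ^ W (k + 1) s)
          = fun s : Multiset ℕ => |q| ^ w (k, s) := funext fun s => by
            rw [hwdef, ← pow_add]
      rwa [he] at h
    refine ⟨hinner, ?_⟩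
    have hC1 : Summable (fun s : Multiset ℕ => |q| ^ W 1 s) := summable_W h0 hq le_rfl
    apply Summable.of_nonneg_of_le (fun k => tsum_nonneg fun s => pow_nonneg h0 _)
      (fun k => ?_) ((summable_geometric_of_lt_one h0 hq).mul_right
        (∑' s : Multiset ℕ, |q| ^ W 1 s))
    calc ∑' s : Multiset ℕ, |q| ^ w (k, s)
        ≤ ∑' s : Multiset ℕ, |q| ^ k * |q| ^ W 1 s := by
          apply Summable.tsum_le_tsum _ (hinner k) (hC1.mul_left _)
          intro s
          rw [← pow_add]
          apply pow_le_pow_of_le_one h0 hq.le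
          have h1 : k ≤ m * (k + 1) := by
            have : 1 * (k + 1) ≤ m * (k + 1) := Nat.mul_le_mul_right _ hm
            omega
          have h2 : 1 * Multiset.card s ≤ (k + 1) * Multiset.card s :=
            Nat.mul_le_mul_right _ (by omega)
          simp only [hwdef, W]
          omega
      _ = |q| ^ k * ∑' s : Multiset ℕ, |q| ^ W 1 s := tsum_mul_left
  have hqq : Summable (fun p : ℕ × Multiset ℕ => q ^ w p) := by
    apply Summable.of_norm
    have : (fun p : ℕ × Multiset ℕ => ‖q ^ w p‖) = fun p => |q| ^ w p :=
      funext fun p => by rw [Real.norm_eq_abs, abs_pow]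
    rwa [this]
  -- Step 3: collapse the double sum
  have hcollapse : (∑' k : ℕ, q ^ (m * (k + 1)) / ∏' j : ℕ, (1 - q ^ (k + 1) * q ^ j))
      = ∑' p : ℕ × Multiset ℕ, q ^ w p := by
    rw [tsum_congr hterm]
    exact (Summable.tsum_prod' hqq hqq.prod_factor).symm
  rw [hcollapse]
  -- Step 4: reindex along the bijection with good partitions
  have hFw : ∀ p : ℕ × Multiset ℕ, q ^ w p = q ^ ((F hm p).1 + 1) := by
    intro p
    rw [F_fst hm p]
  have hE := Equiv.tsum_eq (Equiv.ofBijective (F hm) (F_bijective hm))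
    (fun x : GoodT m => q ^ (x.1 + 1))
  have hstep4 : (∑' p : ℕ × Multiset ℕ, q ^ w p) = ∑' x : GoodT m, q ^ (x.1 + 1) := by
    rw [tsum_congr hFw]
    exact hE
  rw [hstep4]
  -- Step 5: sigma decomposition and counting
  have hsig : Summable (fun x : GoodT m => q ^ (x.1 + 1)) := by
    rw [← (Equiv.ofBijective (F hm) (F_bijective hm)).summable_iff]
    have : ((fun x : GoodT m => q ^ (x.1 + 1)) ∘ (Equiv.ofBijective (F hm) (F_bijective hm)))
        = fun p : ℕ × Multiset ℕ => q ^ w p := funext fun p => (hFw p).symm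
    rwa [this]
  rw [Summable.tsum_sigma hsig]
  apply tsum_congr
  intro n
  have hconst : ∀ c : {π : (n + 1).Partition //
      ∃ s ∈ π.parts, (∀ t ∈ π.parts, s ≤ t) ∧ m ≤ π.parts.count s},
      q ^ ((⟨n, c⟩ : GoodT m).fst + 1) = q ^ (n + 1) := fun c => rfl
  rw [tsum_congr hconst, tsum_const, nsmul_eq_mul]
end
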